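/- arXiv:1410.4118 — 7 statements merged into one kernel-verified Lean document; each statement's English description precedes it below -/
import Mathlib

section
/- Let G be a graph, let C be a clique of G of maximum size (i.e., |C| = ω(G)) with C nonempty, and let A be a set of vertices disjoint from C such that every vertex of C has a neighbour in A. Then there exist distinct vertices a1, a2 ∈ A and distinct vertices c1, c2 ∈ C such that a1 is adjacent to c1 but not to c2, and a2 is adjacent to c2 but not to c1. -/
open SimpleGraph

universe u

variable {V : Type u}

/-- The independence (stability) number of a graph. -/
noncomputable def indepNum (G : SimpleGraph V) : ℕ :=
  sSup {n | ∃ s : Finset V, s.card = n ∧ ∀ x ∈ s, ∀ y ∈ s, x ≠ y → ¬ G.Adj x y}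

/-- A walk is induced: any edge of `G` between vertices of the walk is an edge of the walk. -/
def IsInducedWalk (G : SimpleGraph V) {u v : V} (p : G.Walk u v) : Prop :=
  ∀ x ∈ p.support, ∀ y ∈ p.support, G.Adj x y → p.toSubgraph.Adj x y

/-- An induced path. -/
def IsInducedPath (G : SimpleGraph V) {u v : V} (p : G.Walk u v) : Prop :=
  p.IsPath ∧ IsInducedWalk G p

/-- An odd hole: an induced cycle of odd length at least 5. -/
def HasOddHole (G : SimpleGraph V) : Prop :=
  ∃ (v : V) (p : G.Walk v v), p.IsCycle ∧ IsInducedWalk G p ∧ Odd p.length ∧ 5 ≤ p.length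

/-- A cograph: no induced path on four vertices. -/
def IsCograph (G : SimpleGraph V) : Prop :=
  ¬ ∃ a b c d : V, a ≠ c ∧ a ≠ d ∧ b ≠ d ∧
    G.Adj a b ∧ G.Adj b c ∧ G.Adj c d ∧ ¬ G.Adj a c ∧ ¬ G.Adj a d ∧ ¬ G.Adj b d

/-- A levelling `(L 0, …, L k)` in `G`. -/
def IsLevelling (G : SimpleGraph V) (k : ℕ) (L : ℕ → Set V) : Prop :=
  (∀ i j, i ≤ k → j ≤ k → i ≠ j → Disjoint (L i) (L j)) ∧
  (∃ x, L 0 = {x}) ∧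
  (∀ i, 1 ≤ i → i ≤ k → ∀ v ∈ L i,
     (∃ u ∈ L (i - 1), G.Adj u v) ∧ (∀ h, h + 1 < i → ∀ u ∈ L h, ¬ G.Adj u v))

/-- The interior (internal vertices) of a walk is contained in `S`. -/
def InteriorIn (G : SimpleGraph V) {u v : V} (p : G.Walk u v) (S : Set V) : Prop :=
  ∀ x ∈ p.support, x ≠ u → x ≠ v → x ∈ S

/-- The union `L 0 ∪ ⋯ ∪ L (k-1)`. -/
def lowerLevels (L : ℕ → Set V) (k : ℕ) : Set V := ⋃ i ∈ Finset.range k, L i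

/-- There is an odd induced path between `u` and `v` with interior in the lower levels. -/
def OddConn (G : SimpleGraph V) (L : ℕ → Set V) (k : ℕ) (u v : V) : Prop :=
  u ≠ v ∧ ∃ p : G.Walk u v, IsInducedPath G p ∧ Odd p.length ∧
    InteriorIn G p (lowerLevels L k)

/-- `w ∈ L (i+1)` is a dependent of `u ∈ L i`: `u` is its only parent. -/
def IsDependent (G : SimpleGraph V) (L : ℕ → Set V) (i : ℕ) (u w : V) : Prop :=
  w ∈ L (i + 1) ∧ G.Adj u w ∧ ∀ x ∈ L i, G.Adj x w → x = u

theorem stmt0 [Fintype V] (G : SimpleGraph V) (C : Finset V) (A : Set V)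
    (hC : G.IsNClique (G.cliqueNum) C) (hCne : C.Nonempty)
    (hdisj : ∀ a ∈ A, a ∉ C)
    (hnbr : ∀ c ∈ C, ∃ a ∈ A, G.Adj c a) :
    ∃ a₁ ∈ A, ∃ a₂ ∈ A, ∃ c₁ ∈ C, ∃ c₂ ∈ C,
      a₁ ≠ a₂ ∧ c₁ ≠ c₂ ∧ G.Adj a₁ c₁ ∧ ¬ G.Adj a₁ c₂ ∧ G.Adj a₂ c₂ ∧ ¬ G.Adj a₂ c₁ := by
  classical
  -- No vertex of A is adjacent to all of C.
  have hnotall : ∀ a ∈ A, ∃ c ∈ C, ¬ G.Adj a c := by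
    intro a ha
    by_contra h
    push_neg at h
    have hclique : G.IsClique (insert a C : Finset V) := by
      intro x hx y hy hxy
      simp only [Finset.coe_insert, Set.mem_insert_iff, Finset.mem_coe] at hx hy
      rcases hx with rfl | hx <;> rcases hy with rfl | hy
      · exact absurd rfl hxy
      · exact h y hy
      · exact (h x hx).symm
      · exact hC.1 hx hy hxy
    have hle : (insert a C).card ≤ G.cliqueNum := hclique.card_le_cliqueNum
    rw [Finset.card_insert_of_notMem (hdisj a ha), hC.2] at hle
    omega
  -- pick a₁ ∈ A maximizing the number of neighbours in C
  have hAne : A.Nonempty := by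
    obtain ⟨c, hc⟩ := hCne
    obtain ⟨a, ha, -⟩ := hnbr c hc
    exact ⟨a, ha⟩
  have hAfin : A.Finite := Set.toFinite A
  obtain ⟨a₁, ha₁, hmax⟩ := Set.exists_max_image A (fun a => (C.filter (fun c => G.Adj a c)).card) hAfin
    hAne
  obtain ⟨c₂, hc₂, hnadj⟩ := hnotall a₁ ha₁
  obtain ⟨a₂, ha₂, hadj₂⟩ := hnbr c₂ hc₂
  have hadj₂ : G.Adj a₂ c₂ := hadj₂.symm
  have hc1 : ∃ c₁ ∈ C, G.Adj a₁ c₁ ∧ ¬ G.Adj a₂ c₁ := by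
    by_contra h
    push_neg at h
    have hss : C.filter (fun c => G.Adj a₁ c) ⊂ C.filter (fun c => G.Adj a₂ c) := by
      constructor
      · intro x hx
        simp only [Finset.mem_filter] at hx ⊢
        exact ⟨hx.1, h x hx.1 hx.2⟩
      · intro hsub
        have := hsub (Finset.mem_filter.mpr ⟨hc₂, hadj₂⟩)
        exact hnadj (Finset.mem_filter.mp this).2
    exact absurd (hmax a₂ ha₂) (not_le.mpr (Finset.card_lt_card hss))
  obtain ⟨c₁, hc₁, hadj₁, hnadj₂⟩ := hc1
  refine ⟨a₁, ha₁, a₂, ha₂, c₁, hc₁, c₂, hc₂, ?_, ?_, hadj₁, hnadj, hadj₂, hnadj₂⟩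
  · rintro rfl; exact hnadj hadj₂
  · rintro rfl; exact hnadj hadj₁
end

section
/- If H is a cograph with more than one vertex, then there is a partition of V(H) into two nonempty sets A1, A2 such that either every vertex of A1 is adjacent to every vertex of A2, or no vertex of A1 is adjacent to any vertex of A2. -/
open SimpleGraph

universe u

variable {V : Type u}

lemma compl_cograph {G : SimpleGraph V} (h : IsCograph G) : IsCograph Gᶜ := by
  rintro ⟨a, b, c, d, hac, had, hbd, hab, hbc, hcd, nac, nad, nbd⟩
  rw [compl_adj] at hab hbc hcd
  refine h ⟨b, d, a, c, hab.1.symm, hbc.1, hcd.1.symm, ?_, ?_, ?_, ?_, ?_, ?_⟩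
  · by_contra hh; exact nbd ⟨hbd, hh⟩
  · have : G.Adj a d := by by_contra hh; exact nad ⟨had, hh⟩
    exact this.symm
  · by_contra hh; exact nac ⟨hac, hh⟩
  · exact fun hh => hab.2 hh.symm
  · exact hbc.2
  · exact fun hh => hcd.2 hh.symm

/-- If no edges cross from `A` to `Aᶜ`, walks starting in `A` stay in `A`. -/
lemma walk_stays {G : SimpleGraph V} {A : Set V}
    (h : ∀ x ∈ A, ∀ y ∈ Aᶜ, ¬ G.Adj x y) {u w : V} (p : G.Walk u w) (hu : u ∈ A) :
    w ∈ A := by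
  induction p with
  | nil => exact hu
  | cons hadj q ih =>
    rename_i x y z
    apply ih
    by_contra hy
    exact h x hu y hy hadj

lemma exists_adj_of_reachable {G : SimpleGraph V} {u w : V}
    (h : G.Reachable u w) (hne : u ≠ w) : ∃ x, G.Adj u x := by
  obtain ⟨p⟩ := h
  cases p with
  | nil => exact absurd rfl hne
  | cons hadj q => exact ⟨_, hadj⟩

section Key

variable {G : SimpleGraph V} {v : V}

/-- every vertex `≠ v` reaches, within `V \ {v}`, a neighbour of `v`. -/
lemma reach_nbr (hconn : G.Preconnected) :
    ∀ (w : {x : V // x ≠ v}), ∃ u : {x : V // x ≠ v},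
      G.Adj v ↑u ∧ (G.comap (Subtype.val : {x : V // x ≠ v} → V)).Reachable w u := by
  have main : ∀ (w : V) (p : G.Walk w v) (hw : w ≠ v), ∃ u : {x : V // x ≠ v},
      G.Adj v ↑u ∧ (G.comap (Subtype.val : {x : V // x ≠ v} → V)).Reachable ⟨w, hw⟩ u := by
    intro w p
    induction p with
    | nil => intro hw; exact absurd rfl hw
    | @cons a b c hadj q ih =>
      intro hw
      by_cases hb : b = c
      · subst hb
        exact ⟨⟨a, hw⟩, hadj.symm, Reachable.refl _⟩
      · obtain ⟨u, hu1, hu2⟩ := ih hb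
        have hadj' : (G.comap (Subtype.val : {x : V // x ≠ c} → V)).Adj ⟨a, hw⟩ ⟨b, hb⟩ :=
          hadj
        exact ⟨u, hu1, hadj'.reachable.trans hu2⟩
  intro w
  exact main ↑w ((hconn ↑w v).some) w.2

/-- along a walk from a non-neighbour of `v` to a neighbour, there is a flip edge. -/
lemma flip_edge {W : Type u} {G' : SimpleGraph W} (f : W → V)
    (_hf : ∀ a b, G'.Adj a b → G.Adj (f a) (f b)) :
    ∀ {w u : W} (_ : G'.Walk w u), ¬ G.Adj v (f w) → G.Adj v (f u) →
      ∃ x y : W, G'.Adj x y ∧ ¬ G.Adj v (f x) ∧ G.Adj v (f y) ∧ G'.Reachable w x := by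
  intro w u p
  induction p with
  | nil => intro h1 h2; exact absurd h2 h1
  | @cons a b c hadj q ih =>
    intro h1 h2
    by_cases hb : G.Adj v (f b)
    · exact ⟨a, b, hadj, h1, hb, Reachable.refl _⟩
    · obtain ⟨x, y, h3, h4, h5, h6⟩ := ih hb h2
      exact ⟨x, y, h3, h4, h5, hadj.reachable.trans h6⟩

/-- key lemma: `G` connected cograph, deleting `v` disconnects, then `v` is universal. -/
lemma key (hco : IsCograph G) (hconn : G.Preconnected)
    (hdis : ¬ (G.comap (Subtype.val : {x : V // x ≠ v} → V)).Preconnected) :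
    ∀ w, w ≠ v → G.Adj v w := by
  set G' := G.comap (Subtype.val : {x : V // x ≠ v} → V) with hG'
  rw [Preconnected] at hdis
  push_neg at hdis
  obtain ⟨a, b, hab⟩ := hdis
  intro w hw
  by_contra hnadj
  obtain ⟨u, hu1, hu2⟩ := reach_nbr (v := v) hconn ⟨w, hw⟩
  obtain ⟨p⟩ := hu2
  obtain ⟨x, y, hxy, hx, hy, -⟩ :=
    flip_edge (G' := G') (Subtype.val) (fun _ _ h => h) p hnadj hu1
  -- find c not reachable from x
  have hc : ∃ c : {t : V // t ≠ v}, ¬ G'.Reachable x c := by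
    by_contra hcc
    push_neg at hcc
    exact hab ((hcc a).symm.trans (hcc b))
  obtain ⟨c, hc⟩ := hc
  obtain ⟨z, hz1, hz2⟩ := reach_nbr (v := v) hconn c
  have hxz : ¬ G'.Reachable x z := fun h => hc (h.trans hz2.symm)
  refine hco ⟨↑x, ↑y, v, ↑z, x.2, ?_, ?_, hxy, hy.symm, hz1, ?_, ?_, ?_⟩
  · intro h
    exact hxz (by rw [Subtype.coe_injective h])
  · intro h
    exact hxz (hxy.reachable.trans (by rw [Subtype.coe_injective h]))
  · exact fun h => hx h.symm
  · intro h
    exact hxz (Adj.reachable (show G'.Adj x z from h))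
  · intro h
    exact hxz (hxy.reachable.trans (Adj.reachable (show G'.Adj y z from h)))

end Key

lemma main_lemma : ∀ (n : ℕ) {V : Type u} [Fintype V] (G : SimpleGraph V),
    Fintype.card V = n → 1 < Fintype.card V → IsCograph G →
    ∃ A : Set V, A.Nonempty ∧ Aᶜ.Nonempty ∧
      ((∀ x ∈ A, ∀ y ∈ Aᶜ, G.Adj x y) ∨ (∀ x ∈ A, ∀ y ∈ Aᶜ, ¬ G.Adj x y)) := by
  intro n
  induction n using Nat.strong_induction_on with
  | _ n ih =>
    intro V _ G hn hcard hco
    haveI : Nontrivial V := Fintype.one_lt_card_iff_nontrivial.mp hcard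
    by_cases hc : G.Preconnected
    · by_cases hc2 : Gᶜ.Preconnected
      · -- both connected: delete a vertex
        classical
        obtain ⟨v⟩ : Nonempty V := inferInstance
        by_cases h1 : (G.comap (Subtype.val : {x : V // x ≠ v} → V)).Preconnected
        · by_cases h2 : (Gᶜ.comap (Subtype.val : {x : V // x ≠ v} → V)).Preconnected
          · -- both deleted graphs connected: use IH (needs card ≥ 3)
            have hcW : Fintype.card {x : V // x ≠ v} = Fintype.card V - 1 := by
              have h := Fintype.card_subtype_compl (fun x : V => x = v)
              rw [Fintype.card_subtype_eq] at h
              exact h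
            by_cases h3 : 1 < Fintype.card {x : V // x ≠ v}
            · have hlt : Fintype.card {x : V // x ≠ v} < n := by omega
              have hcoW : IsCograph (G.comap (Subtype.val : {x : V // x ≠ v} → V)) := by
                rintro ⟨a, b, c, d, q1, q2, q3, q4, q5, q6, q7, q8, q9⟩
                exact hco ⟨↑a, ↑b, ↑c, ↑d, Subtype.coe_injective.ne q1,
                  Subtype.coe_injective.ne q2, Subtype.coe_injective.ne q3,
                  q4, q5, q6, q7, q8, q9⟩
              obtain ⟨A, hA1, hA2, hA3⟩ := ih _ hlt
                (G.comap (Subtype.val : {x : V // x ≠ v} → V)) rfl h3 hcoW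
              obtain ⟨a', ha'⟩ := hA1
              obtain ⟨b', hb'⟩ := hA2
              rcases hA3 with hA3 | hA3
              · -- complete between: Gᶜ.comap disconnected
                exfalso
                have : ∀ x ∈ A, ∀ y ∈ Aᶜ,
                    ¬ (Gᶜ.comap (Subtype.val : {x : V // x ≠ v} → V)).Adj x y := by
                  intro x hx y hy h
                  exact h.2 (hA3 x hx y hy)
                obtain ⟨p⟩ := h2 a' b'
                exact hb' (walk_stays this p ha')
              · exfalso
                obtain ⟨p⟩ := h1 a' b'
                exact hb' (walk_stays hA3 p ha')
            · -- card V = 2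
              exfalso
              have h2card : Fintype.card V = 2 := by omega
              obtain ⟨w, hwv⟩ := exists_ne v
              have hsub : ∀ y : V, y ≠ v → y = w := by
                intro y hy
                have hW1 : Fintype.card {x : V // x ≠ v} = 1 := by omega
                have := Fintype.card_le_one_iff.mp (le_of_eq hW1)
                  ⟨y, hy⟩ ⟨w, hwv⟩
                exact congrArg Subtype.val this
              obtain ⟨x, hx⟩ := exists_adj_of_reachable (hc v w) (Ne.symm hwv)
              have hx' : x = w := hsub x (G.ne_of_adj hx).symm
              obtain ⟨x2, hx2⟩ := exists_adj_of_reachable (hc2 v w) (Ne.symm hwv)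
              have hx2' : x2 = w := hsub x2 (Gᶜ.ne_of_adj hx2).symm
              rw [hx'] at hx
              rw [hx2'] at hx2
              exact hx2.2 hx
          · -- Gᶜ minus v disconnected: v universal in Gᶜ
            have huniv := key (compl_cograph hco) hc2 h2
            refine ⟨{v}, ⟨v, rfl⟩, ?_, Or.inr ?_⟩
            · obtain ⟨w, hwv⟩ := exists_ne v
              exact ⟨w, hwv⟩
            · rintro x rfl y hy
              exact (huniv y hy).2
        · -- G minus v disconnected: v universal in G
          have huniv := key hco hc h1
          refine ⟨{v}, ⟨v, rfl⟩, ?_, Or.inl ?_⟩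
          · obtain ⟨w, hwv⟩ := exists_ne v
            exact ⟨w, hwv⟩
          · rintro x rfl y hy
            exact huniv y hy
      · -- Gᶜ disconnected: join
        rw [Preconnected] at hc2
        push_neg at hc2
        obtain ⟨a, b, hab⟩ := hc2
        refine ⟨{x | Gᶜ.Reachable a x}, ⟨a, Reachable.refl a⟩, ⟨b, hab⟩, Or.inl ?_⟩
        intro x hx y hy
        have hne : x ≠ y := by rintro rfl; exact hy hx
        by_contra hnadj
        exact hy (Reachable.trans hx (Adj.reachable ⟨hne, hnadj⟩))
    · -- G disconnected
      rw [Preconnected] at hc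
      push_neg at hc
      obtain ⟨a, b, hab⟩ := hc
      refine ⟨{x | G.Reachable a x}, ⟨a, Reachable.refl a⟩, ⟨b, hab⟩, Or.inr ?_⟩
      intro x hx y hy hadj
      exact hy (Reachable.trans hx hadj.reachable)

theorem stmt1 [Fintype V] (H : SimpleGraph V) (hcard : 1 < Fintype.card V)
    (hco : IsCograph H) :
    ∃ A : Set V, A.Nonempty ∧ Aᶜ.Nonempty ∧
      ((∀ x ∈ A, ∀ y ∈ Aᶜ, H.Adj x y) ∨ (∀ x ∈ A, ∀ y ∈ Aᶜ, ¬ H.Adj x y)) :=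
  main_lemma (Fintype.card V) H rfl hcard hco
end

section
/- Every cograph is a perfect graph; in particular, the chromatic number of every cograph equals its clique number, and the same holds for every induced subgraph. -/
open SimpleGraph

universe u

variable {V : Type u}

section CographPerfect

variable {W : Type u}

/-- An independent finset. -/
private def IndepF (G : SimpleGraph W) (s : Finset W) : Prop :=
  ∀ x ∈ s, ∀ y ∈ s, x ≠ y → ¬ G.Adj x y

private lemma cograph_induce {G : SimpleGraph W} (h : IsCograph G) (X : Set W) :
    IsCograph (G.induce X) := by
  rintro ⟨a, b, c, d, hac, had, hbd, hab, hbc, hcd, nac, nad, nbd⟩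
  exact h ⟨a, b, c, d, Subtype.coe_injective.ne hac, Subtype.coe_injective.ne had,
    Subtype.coe_injective.ne hbd, hab, hbc, hcd, nac, nad, nbd⟩

/-- In a cograph, a "dominating" independent set meets every maximal clique. -/
private lemma indep_meets_maxclique [Fintype W] {G : SimpleGraph W}
    (hco : IsCograph G) {S K : Finset W}
    (hSind : IndepF G S)
    (hSmax : ∀ v, v ∉ S → ∃ u ∈ S, G.Adj u v)
    (hK : G.IsClique (K : Set W))
    (hKmax : ∀ v, v ∉ K → ∃ u ∈ K, ¬ G.Adj v u)
    (hKne : K.Nonempty) : ∃ x ∈ K, x ∈ S := by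
  classical
  by_contra hdisj
  push_neg at hdisj
  obtain ⟨v0, hv0⟩ := hKne
  obtain ⟨s0, hs0S, _⟩ := hSmax v0 (hdisj v0 hv0)
  obtain ⟨s, hsS, hsmax⟩ :=
    S.exists_max_image (fun s => (K.filter (fun w => G.Adj s w)).card) ⟨s0, hs0S⟩
  have hsK : s ∉ K := fun hmem => hdisj s hmem hsS
  obtain ⟨w, hwK, hsw⟩ := hKmax s hsK
  obtain ⟨t, htS, htw⟩ := hSmax w (hdisj w hwK)
  have hst : s ≠ t := fun e => hsw (e ▸ htw)
  have hnst : ¬ G.Adj s t := hSind s hsS t htS hst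
  have hnsub : ¬ (K.filter (fun x => G.Adj s x) ⊆ K.filter (fun x => G.Adj t x)) := by
    intro hsub
    have hw' : w ∈ K.filter (fun x => G.Adj t x) := Finset.mem_filter.2 ⟨hwK, htw⟩
    have hw'' : w ∉ K.filter (fun x => G.Adj s x) := fun hmem =>
      hsw (Finset.mem_filter.1 hmem).2
    have hlt := Finset.card_lt_card
      ((Finset.ssubset_iff_of_subset hsub).2 ⟨w, hw', hw''⟩)
    exact absurd (hsmax t htS) (not_le.2 hlt)
  obtain ⟨v, hvmem, hvnot⟩ := Finset.not_subset.1 hnsub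
  obtain ⟨hvK, hsv⟩ := Finset.mem_filter.1 hvmem
  have htv : ¬ G.Adj t v := fun hadj => hvnot (Finset.mem_filter.2 ⟨hvK, hadj⟩)
  have hvw : v ≠ w := fun e => hsw (e ▸ hsv)
  have hadjvw : G.Adj v w := hK hvK hwK hvw
  have hsw' : s ≠ w := fun e => hdisj w hwK (e ▸ hsS)
  have hvt : v ≠ t := fun e => hdisj v hvK (e ▸ htS)
  exact hco ⟨s, v, w, t, hsw', hst, hvt, hsv, hadjvw, htw.symm, hsw, hnst,
    fun hadj => htv hadj.symm⟩

/-- Existence of a maximum independent set; it dominates all other vertices. -/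
private lemma exists_max_indep [Fintype W] (G : SimpleGraph W) [Nonempty W] :
    ∃ S : Finset W, S.Nonempty ∧ IndepF G S ∧ ∀ v, v ∉ S → ∃ u ∈ S, G.Adj u v := by
  classical
  obtain ⟨S, hSmem, hSmax⟩ :=
    (Finset.univ.powerset.filter (fun s => IndepF G s)).exists_max_image Finset.card
      ⟨∅, by simp [IndepF]⟩
  have hSind : IndepF G S := (Finset.mem_filter.1 hSmem).2
  obtain ⟨x⟩ := ‹Nonempty W›
  have hxcard : 1 ≤ S.card := by
    have hx : ({x} : Finset W) ∈ Finset.univ.powerset.filter (fun s => IndepF G s) := by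
      simp only [Finset.mem_filter, Finset.mem_powerset, Finset.subset_univ, true_and]
      intro a ha b hb hab
      simp only [Finset.mem_singleton] at ha hb
      exact absurd (ha.trans hb.symm) hab
    simpa using hSmax _ hx
  refine ⟨S, Finset.card_pos.1 hxcard, hSind, fun v hv => ?_⟩
  by_contra hno
  push_neg at hno
  have hins : IndepF G (insert v S) := by
    intro a ha b hb hab
    rcases Finset.mem_insert.1 ha with rfl | haS
    · rcases Finset.mem_insert.1 hb with rfl | hbS
      · exact absurd rfl hab
      · exact fun hadj => hno b hbS hadj.symm
    · rcases Finset.mem_insert.1 hb with rfl | hbS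
      · exact fun hadj => hno a haS hadj
      · exact hSind a haS b hbS hab
  have hmem : insert v S ∈ Finset.univ.powerset.filter (fun s => IndepF G s) := by
    simp only [Finset.mem_filter, Finset.mem_powerset, Finset.subset_univ, true_and]
    exact hins
  have := hSmax _ hmem
  rw [Finset.card_insert_of_notMem hv] at this
  omega

/-- Every clique extends to a maximal clique. -/
private lemma exists_maximal_clique [Fintype W] (G : SimpleGraph W) (K' : Finset W)
    (h : G.IsClique (K' : Set W)) :
    ∃ K : Finset W, K' ⊆ K ∧ G.IsClique (K : Set W) ∧
      ∀ v, v ∉ K → ∃ u ∈ K, ¬ G.Adj v u := by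
  classical
  obtain ⟨K, hKmem, hKmax⟩ :=
    (Finset.univ.powerset.filter (fun s => K' ⊆ s ∧ G.IsClique (s : Set W))).exists_max_image
      Finset.card ⟨K', by simp [h]⟩
  obtain ⟨hsub, hKcl⟩ := (Finset.mem_filter.1 hKmem).2
  refine ⟨K, hsub, hKcl, fun v hv => ?_⟩
  by_contra hno
  push_neg at hno
  have hins : G.IsClique ((insert v K : Finset W) : Set W) := by
    rw [Finset.coe_insert]
    exact hKcl.insert (fun b hb hne => hno b hb)
  have hmem : insert v K ∈
      Finset.univ.powerset.filter (fun s => K' ⊆ s ∧ G.IsClique (s : Set W)) := by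
    simp only [Finset.mem_filter, Finset.mem_powerset, Finset.subset_univ, true_and]
    exact ⟨hsub.trans (Finset.subset_insert _ _), hins⟩
  have := hKmax _ hmem
  rw [Finset.card_insert_of_notMem hv] at this
  omega

/-- Extending a coloring of the complement of an independent set by one color. -/
private lemma colorable_step [Fintype W] {G : SimpleGraph W} {S : Finset W}
    (hS : IndepF G S) {n : ℕ}
    (hc : (G.induce ((↑S : Set W)ᶜ)).Colorable n) : G.Colorable (n + 1) := by
  classical
  obtain ⟨C⟩ := hc
  refine ⟨SimpleGraph.Coloring.mk
    (fun v => if h : v ∈ S then Fin.last n else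
      (C ⟨v, by simpa using h⟩).castSucc) ?_⟩
  intro v w hvw
  by_cases hv : v ∈ S <;> by_cases hw : w ∈ S <;> simp only [hv, hw, dif_pos, dif_neg,
    not_false_iff]
  · exact absurd hvw (hS v hv w hw hvw.ne)
  · exact (Fin.castSucc_lt_last _).ne'
  · exact (Fin.castSucc_lt_last _).ne
  · have hadj : (G.induce ((↑S : Set W)ᶜ)).Adj ⟨v, by simpa using hv⟩ ⟨w, by simpa using hw⟩ :=
      hvw
    exact fun hEq => C.valid hadj (Fin.castSucc_injective _ hEq)

private lemma cograph_colorable : ∀ (n : ℕ) (W : Type u) [Fintype W] (G : SimpleGraph W),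
    Fintype.card W ≤ n → IsCograph G → G.Colorable G.cliqueNum := by
  intro n
  induction n with
  | zero =>
    intro W _ G hcard _
    have : IsEmpty W := Fintype.card_eq_zero_iff.1 (Nat.le_zero.1 hcard)
    exact SimpleGraph.Colorable.of_isEmpty (G := G) _
  | succ n ih =>
    intro W _ G hcard hco
    classical
    by_cases hW : IsEmpty W
    · exact SimpleGraph.Colorable.of_isEmpty (G := G) _
    have : Nonempty W := not_isEmpty_iff.1 hW
    obtain ⟨S, hSne, hSind, hSmax⟩ := exists_max_indep G
    set X : Set W := (↑S : Set W)ᶜ with hX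
    have hcardX : Fintype.card X < Fintype.card W := by
      obtain ⟨s0, hs0⟩ := hSne
      refine Fintype.card_lt_of_injective_of_notMem Subtype.val Subtype.val_injective
        (b := s0) ?_
      rintro ⟨y, rfl⟩
      exact (y.2 : (↑y : W) ∈ (↑S : Set W)ᶜ) hs0
    have hcoX : IsCograph (G.induce X) := cograph_induce hco X
    have hcol : (G.induce X).Colorable (G.induce X).cliqueNum :=
      ih X (G.induce X) (by omega) hcoX
    have hcol' : G.Colorable ((G.induce X).cliqueNum + 1) := colorable_step hSind hcol
    have hle : (G.induce X).cliqueNum + 1 ≤ G.cliqueNum := by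
      obtain ⟨s, hs⟩ := (G.induce X).exists_isNClique_cliqueNum
      set K' : Finset W := s.image Subtype.val with hK'
      have hK'clique : G.IsClique (K' : Set W) := by
        intro x hx y hy hxy
        simp only [hK', Finset.coe_image, Set.mem_image, Finset.mem_coe] at hx hy
        obtain ⟨x', hx', rfl⟩ := hx
        obtain ⟨y', hy', rfl⟩ := hy
        exact hs.isClique hx' hy' (fun e => hxy (congrArg Subtype.val e))
      have hK'card : K'.card = (G.induce X).cliqueNum := by
        rw [hK', Finset.card_image_of_injective _ Subtype.val_injective, hs.card_eq]
      have hK'S : ∀ x ∈ K', x ∉ S := by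
        intro x hx
        simp only [hK', Finset.mem_image] at hx
        obtain ⟨x', _, rfl⟩ := hx
        exact fun hmem => (x'.2 : (↑x' : W) ∈ (↑S : Set W)ᶜ) hmem
      obtain ⟨K, hsub, hKcl, hKmax⟩ := exists_maximal_clique G K' hK'clique
      have hKne : K.Nonempty := by
        obtain ⟨z⟩ := ‹Nonempty W›
        by_cases hz : z ∈ K
        · exact ⟨z, hz⟩
        · obtain ⟨u, hu, _⟩ := hKmax z hz
          exact ⟨u, hu⟩
      obtain ⟨x, hxK, hxS⟩ := indep_meets_maxclique hco hSind hSmax hKcl hKmax hKne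
      have hss : K' ⊂ K :=
        (Finset.ssubset_iff_of_subset hsub).2 ⟨x, hxK, fun hmem => hK'S x hmem hxS⟩
      have hlt : K'.card < K.card := Finset.card_lt_card hss
      have hKle : K.card ≤ G.cliqueNum := IsClique.card_le_cliqueNum (tc := hKcl)
      omega
    exact hcol'.mono hle

end CographPerfect

theorem stmt2 [Fintype V] (G : SimpleGraph V) (h : IsCograph G) (X : Set V) :
    (G.induce X).chromaticNumber = ((G.induce X).cliqueNum : ℕ∞) := by
  classical
  haveI : Fintype X := Set.Finite.fintype (Set.toFinite X)
  have hco : IsCograph (G.induce X) := cograph_induce h X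
  have hcol : (G.induce X).Colorable (G.induce X).cliqueNum :=
    cograph_colorable (Fintype.card X) X (G.induce X) le_rfl hco
  refine le_antisymm hcol.chromaticNumber_le ?_
  obtain ⟨s, hs⟩ := (G.induce X).exists_isNClique_cliqueNum
  have := hs.isClique.card_le_chromaticNumber
  rwa [hs.card_eq] at this
end

section
/- Under the hypotheses of the previous theorem (A stable, every vertex of B having a neighbour in A, and a cograph H on A encoding parities of A-paths), if moreover C ⊆ B is a clique of size ω(G), M ⊆ A, and every vertex of C has a neighbour in M, then no vertex of C is adjacent to all of M. -/
open SimpleGraph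

universe u

variable {V : Type u}

lemma induced2 (G : SimpleGraph V) {a b c : V} (hab : G.Adj a b) (hbc : G.Adj b c)
    (hac : ¬ G.Adj a c) (hne : a ≠ c) :
    IsInducedPath G (Walk.cons hab (Walk.cons hbc Walk.nil)) := by
  constructor
  · simp [Walk.isPath_def, hab.ne, hbc.ne, hne]
  · intro x hx y hy hxy
    simp only [Walk.support_cons, Walk.support_nil, List.mem_cons, List.mem_singleton,
      List.not_mem_nil, or_false] at hx hy
    simp only [Walk.toSubgraph, SimpleGraph.Subgraph.sup_adj, SimpleGraph.subgraphOfAdj_adj, SimpleGraph.Subgraph.not_bot_adj]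
    rcases hx with rfl|rfl|rfl <;> rcases hy with rfl|rfl|rfl <;>
      simp_all [G.ne_of_adj hxy, Sym2.eq, Sym2.rel_iff'] <;> tauto

lemma induced3 (G : SimpleGraph V) {a b c d : V} (hab : G.Adj a b) (hbc : G.Adj b c)
    (hcd : G.Adj c d) (hac : ¬ G.Adj a c) (had : ¬ G.Adj a d) (hbd : ¬ G.Adj b d)
    (hnac : a ≠ c) (hnad : a ≠ d) (hnbd : b ≠ d) :
    IsInducedPath G (Walk.cons hab (Walk.cons hbc (Walk.cons hcd Walk.nil))) := by
  constructor
  · simp [Walk.isPath_def, hab.ne, hbc.ne, hcd.ne, hnac, hnad, hnbd]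
  · intro x hx y hy hxy
    simp only [Walk.support_cons, Walk.support_nil, List.mem_cons, List.mem_singleton,
      List.not_mem_nil, or_false] at hx hy
    simp only [Walk.toSubgraph, SimpleGraph.Subgraph.sup_adj, SimpleGraph.subgraphOfAdj_adj, SimpleGraph.Subgraph.not_bot_adj]
    rcases hx with rfl|rfl|rfl|rfl <;> rcases hy with rfl|rfl|rfl|rfl <;>
      simp_all [G.ne_of_adj hxy, Sym2.eq, Sym2.rel_iff'] <;> tauto

theorem stmt4 [Fintype V] (G : SimpleGraph V) (A B : Set V)
    (hpart : A ∪ B = Set.univ) (hAB : Disjoint A B)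
    (hstable : ∀ x ∈ A, ∀ y ∈ A, ¬ G.Adj x y)
    (hnbr : ∀ b ∈ B, ∃ a ∈ A, G.Adj b a)
    (H : SimpleGraph V) (hco : IsCograph H)
    (hHA : ∀ x y, H.Adj x y → x ∈ A ∧ y ∈ A)
    (hpar : ∀ u v : V, u ∈ A → v ∈ A → u ≠ v → ∀ p : G.Walk u v,
       IsInducedPath G p → InteriorIn G p Aᶜ → (H.Adj u v ↔ Odd p.length))
    (C : Finset V) (hCB : ↑C ⊆ B) (hCclique : G.IsNClique (G.cliqueNum) C)
    (M : Set V) (hM : M ⊆ A) (hCM : ∀ c ∈ C, ∃ m ∈ M, G.Adj c m) :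
    ∀ v ∈ C, ∃ m ∈ M, ¬ G.Adj v m := by
  classical
  intro v hv
  by_contra hcon
  push_neg at hcon
  -- v adjacent to all of M
  have hBA : ∀ x ∈ B, x ∉ A := fun x hx hxa => hAB.ne_of_mem hxa hx rfl
  have hvB : v ∈ B := hCB hv
  -- Step 1: no two distinct members of M are H-adjacent
  have step1 : ∀ m ∈ M, ∀ m' ∈ M, m ≠ m' → ¬ H.Adj m m' := by
    intro m hm m' hm' hne hH
    have h1 : G.Adj m v := (hcon m hm).symm
    have h2 : G.Adj v m' := hcon m' hm'
    have h3 : ¬ G.Adj m m' := hstable m (hM hm) m' (hM hm')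
    have hp := induced2 G h1 h2 h3 hne
    have hint : InteriorIn G (Walk.cons h1 (Walk.cons h2 Walk.nil)) Aᶜ := by
      intro x hx hxm hxm'
      simp only [Walk.support_cons, Walk.support_nil, List.mem_cons, List.mem_singleton,
        List.not_mem_nil, or_false] at hx
      rcases hx with rfl|rfl|rfl
      · exact absurd rfl hxm
      · exact hBA x hvB
      · exact absurd rfl hxm'
    have hodd := (hpar m m' (hM hm) (hM hm') hne _ hp hint).mp hH
    simp only [Walk.length_cons, Walk.length_nil] at hodd
    exact (by decide : ¬ Odd 2) hodd
  -- Step 2: no cross pair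
  have step2 : ∀ c ∈ C, ∀ c' ∈ C, ∀ m ∈ M, ∀ m' ∈ M,
      G.Adj c m → ¬ G.Adj c' m → G.Adj c' m' → ¬ G.Adj c m' → False := by
    intro c hc c' hc' m hm m' hm' hcm hc'm hc'm' hcm'
    have hne : c ≠ c' := fun h => hc'm (h ▸ hcm)
    have hcc' : G.Adj c c' := hCclique.1 hc hc' hne
    have hmm' : m ≠ m' := fun h => hcm' (h ▸ hcm)
    have h3 : ¬ G.Adj m m' := hstable m (hM hm) m' (hM hm')
    have hmc' : ¬ G.Adj m c' := fun h => hc'm h.symm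
    have hp := induced3 G hcm.symm hcc' hc'm' hmc' h3 hcm'
      (fun h => hBA c' (hCB hc') (h ▸ hM hm)) hmm'
      (fun h => hBA c (hCB hc) ((congrArg _ h.symm).mp (hM hm') : c ∈ A))
    have hint : InteriorIn G (Walk.cons hcm.symm (Walk.cons hcc' (Walk.cons hc'm' Walk.nil))) Aᶜ := by
      intro x hx hxm hxm'
      simp only [Walk.support_cons, Walk.support_nil, List.mem_cons, List.mem_singleton,
        List.not_mem_nil, or_false] at hx
      rcases hx with rfl|rfl|rfl|rfl
      · exact absurd rfl hxm
      · exact hBA x (hCB hc)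
      · exact hBA x (hCB hc')
      · exact absurd rfl hxm'
    have hodd3 : Odd (Walk.cons hcm.symm (Walk.cons hcc' (Walk.cons hc'm' Walk.nil))).length := by
      simp only [Walk.length_cons, Walk.length_nil]
      decide
    have hH : H.Adj m m' := (hpar m m' (hM hm) (hM hm') hmm' _ hp hint).mpr hodd3
    exact step1 m hm m' hm' hmm' hH
  -- Step 3: counting argument
  have hCne : C.Nonempty := ⟨v, hv⟩
  set N : V → Finset V := fun c => M.toFinset.filter (fun m => G.Adj c m) with hN
  have memN : ∀ c m, m ∈ N c ↔ m ∈ M ∧ G.Adj c m := by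
    intro c m; simp [hN, Set.mem_toFinset]
  obtain ⟨c0, hc0, hmin⟩ := C.exists_min_image (fun c => (N c).card) hCne
  have hsub : ∀ c ∈ C, N c0 ⊆ N c := by
    intro c hc m hmNc0
    by_contra hmNc
    obtain ⟨hmM, hc0m⟩ := (memN c0 m).mp hmNc0
    have hmc : ¬ G.Adj c m := fun h => hmNc ((memN c m).mpr ⟨hmM, h⟩)
    have hNcNc0 : N c ⊆ N c0 := by
      intro m' hm'
      obtain ⟨hm'M, hcm'⟩ := (memN c m').mp hm'
      refine (memN c0 m').mpr ⟨hm'M, ?_⟩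
      by_contra hc0m'
      exact step2 c0 hc0 c hc m hmM m' hm'M hc0m hmc hcm' hc0m'
    have hlt : (N c).card < (N c0).card :=
      Finset.card_lt_card ⟨hNcNc0, fun h => hmNc (h hmNc0)⟩
    exact absurd (hmin c hc) (by omega)
  obtain ⟨m0, hm0M, hc0m0⟩ := hCM c0 hc0
  have hm0 : ∀ c ∈ C, G.Adj c m0 := by
    intro c hc
    exact ((memN c m0).mp (hsub c hc ((memN c0 m0).mpr ⟨hm0M, hc0m0⟩))).2
  have hm0C : m0 ∉ C := fun h => hBA m0 (hCB h) (hM hm0M)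
  have hclique : G.IsClique (insert m0 C : Finset V) := by
    intro x hx y hy hxy
    simp only [Finset.coe_insert, Set.mem_insert_iff, Finset.mem_coe] at hx hy
    rcases hx with rfl|hx <;> rcases hy with rfl|hy
    · exact absurd rfl hxy
    · exact (hm0 y hy).symm
    · exact hm0 x hx
    · exact hCclique.1 hx hy hxy
  have hcard : (insert m0 C).card = G.cliqueNum + 1 := by
    rw [Finset.card_insert_of_notMem hm0C, hCclique.2]
  have := hclique.card_le_cliqueNum
  omega
end

section
/- There is a sequence of graphs (G_k) with no odd holes such that ω(G_k) = 3^k and χ(G_k) ≥ (7/2)^k for all k ≥ 0; in particular, for every α < log(7/2)/log 3 there exist graphs G with no odd hole and χ(G) ≥ ω(G)^α with ω(G) arbitrarily large. The construction: G_0 is a single vertex, and G_k is obtained from G_(k−1) by substituting a copy of the complement of the 7-cycle for each vertex. -/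
open SimpleGraph

universe u

variable {V : Type u}

set_option maxRecDepth 100000
section StmtAux

open SimpleGraph

variable {A : Type} {B : Type} {K : SimpleGraph A} {T : SimpleGraph B}

def NoLongHole (G : SimpleGraph A) : Prop :=
  ∀ (v : A) (p : G.Walk v v), p.IsCycle → IsInducedWalk G p → 5 ≤ p.length → False

def lexProd (G : SimpleGraph A) (H : SimpleGraph B) : SimpleGraph (A × B) where
  Adj a b := G.Adj a.1 b.1 ∨ (a.1 = b.1 ∧ H.Adj a.2 b.2)
  symm := ⟨by rintro a b (h | ⟨h1, h2⟩); exacts [Or.inl h.symm, Or.inr ⟨h1.symm, h2.symm⟩]⟩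
  loopless := ⟨by rintro a (h | ⟨-, h⟩); exacts [G.loopless.irrefl _ h, H.loopless.irrefl _ h]⟩

@[simp] lemma lexProd_adj {G : SimpleGraph A} {H : SimpleGraph B} {x y : A × B} :
    (lexProd G H).Adj x y ↔ G.Adj x.1 y.1 ∨ (x.1 = y.1 ∧ H.Adj x.2 y.2) := Iff.rfl

def C7bar : SimpleGraph (ZMod 7) where
  Adj i j := i ≠ j ∧ i - j ≠ 1 ∧ j - i ≠ 1
  symm := ⟨by rintro i j ⟨h1, h2, h3⟩; exact ⟨h1.symm, h3, h2⟩⟩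
  loopless := ⟨by rintro i ⟨h, -⟩; exact h rfl⟩

instance : DecidableRel C7bar.Adj := fun i j =>
  inferInstanceAs (Decidable (i ≠ j ∧ i - j ≠ 1 ∧ j - i ≠ 1))

lemma getVert_eq_support_getElem {u v : A} (p : K.Walk u v) {i : ℕ} (hi : i ≤ p.length) :
    p.getVert i = p.support[i]'(by simp [Walk.length_support]; omega) := by
  induction p generalizing i with
  | nil =>
      have : i = 0 := by simpa using hi
      subst this; simp
  | cons h q ih =>
      cases i with
      | zero => simp
      | succ n =>
          simp only [Walk.getVert_cons_succ, Walk.support_cons, List.getElem_cons_succ]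
          exact ih (by simpa [Nat.succ_le_iff, Nat.lt_succ_iff] using hi)

lemma cycle_getVert_inj {v : A} {p : K.Walk v v} (hc : p.IsCycle) {i j : ℕ}
    (hi : i < p.length) (hj : j < p.length) (h : p.getVert i = p.getVert j) : i = j := by
  have hnd : p.support.tail.Nodup := hc.2
  have hlen3 := hc.three_le_length
  have htl : p.support.tail.length = p.length := by
    have h2 := Walk.length_support p
    conv_lhs at h2 => rw [p.support_eq_cons]
    simpa using h2
  have key : ∀ m : ℕ, ∀ hm : m ≤ p.length, ∀ h1 : 1 ≤ m,
      p.getVert m = p.support.tail[m-1]'(by rw [htl]; omega) := by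
    intro m hm h1
    rw [getVert_eq_support_getElem p hm, List.getElem_tail]
    congr 1
    omega
  rcases Nat.eq_zero_or_pos i with rfl | hi1 <;> rcases Nat.eq_zero_or_pos j with rfl | hj1
  · rfl
  · exfalso
    rw [Walk.getVert_zero] at h
    have hv : p.getVert p.length = v := Walk.getVert_length p
    have e1 : p.support.tail[j-1]'(by rw [htl]; omega) = v := by rw [← key j hj.le hj1, ← h]
    have e2 : p.support.tail[p.length-1]'(by rw [htl]; omega) = v := by
      rw [← key p.length le_rfl (by omega), hv]
    have := (hnd.getElem_inj_iff).mp (e1.trans e2.symm)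
    omega
  · exfalso
    rw [Walk.getVert_zero] at h
    have hv : p.getVert p.length = v := Walk.getVert_length p
    have e1 : p.support.tail[i-1]'(by rw [htl]; omega) = v := by rw [← key i hi.le hi1, h]
    have e2 : p.support.tail[p.length-1]'(by rw [htl]; omega) = v := by
      rw [← key p.length le_rfl (by omega), hv]
    have := (hnd.getElem_inj_iff).mp (e1.trans e2.symm)
    omega
  · have e1 := key i hi.le hi1
    have e2 := key j hj.le hj1
    rw [e1, e2] at h
    have := (hnd.getElem_inj_iff).mp h
    omega

/-- cyclic vertex accessor -/
def cyc {v : A} (p : K.Walk v v) (i : ℕ) : A := p.getVert (i % p.length)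

lemma cyc_congr {v : A} (p : K.Walk v v) {i j : ℕ} (h : i ≡ j [MOD p.length]) :
    cyc p i = cyc p j := by unfold cyc; rw [h]

lemma cyc_inj {v : A} {p : K.Walk v v} (hc : p.IsCycle) {i j : ℕ}
    (h : cyc p i = cyc p j) : i ≡ j [MOD p.length] := by
  have hn : 0 < p.length := by have := hc.three_le_length; omega
  exact cycle_getVert_inj hc (Nat.mod_lt _ hn) (Nat.mod_lt _ hn) h

lemma cyc_mem {v : A} (p : K.Walk v v) (hn : 0 < p.length) (i : ℕ) : cyc p i ∈ p.support := by
  rw [Walk.mem_support_iff_exists_getVert]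
  exact ⟨i % p.length, rfl, (Nat.mod_lt _ hn).le⟩

lemma mem_cyc {v : A} {p : K.Walk v v} (hn : 0 < p.length) {x : A} (hx : x ∈ p.support) :
    ∃ i < p.length, x = cyc p i := by
  rw [Walk.mem_support_iff_exists_getVert] at hx
  obtain ⟨t, ht, htl⟩ := hx
  rcases eq_or_lt_of_le htl with rfl | hlt
  · refine ⟨0, hn, ?_⟩
    unfold cyc
    rw [Nat.zero_mod, Walk.getVert_zero, ← ht, Walk.getVert_length]
  · exact ⟨t, hlt, by unfold cyc; rw [Nat.mod_eq_of_lt hlt, ht]⟩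

lemma cyc_adj {v : A} {p : K.Walk v v} (hn : 3 ≤ p.length) (i : ℕ) :
    K.Adj (cyc p i) (cyc p (i + 1)) := by
  have hn0 : 0 < p.length := by omega
  have h1 : i % p.length < p.length := Nat.mod_lt _ hn0
  have hA := p.adj_getVert_succ h1
  have hmod : (i+1) % p.length = (i % p.length + 1) % p.length := by
    conv_lhs => rw [Nat.add_mod]
    rw [Nat.mod_eq_of_lt (by omega : 1 < p.length)]
  show K.Adj (p.getVert (i % p.length)) (p.getVert ((i+1) % p.length))
  rw [hmod]
  rcases eq_or_lt_of_le (by omega : i % p.length + 1 ≤ p.length) with he | hlt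
  · rw [he, Nat.mod_self, Walk.getVert_zero]
    rw [he, Walk.getVert_length] at hA
    exact hA
  · rw [Nat.mod_eq_of_lt hlt]
    exact hA

lemma cyc_consec {v : A} {p : K.Walk v v} (hc : p.IsCycle) (hi : IsInducedWalk K p)
    {i j : ℕ} (h : K.Adj (cyc p i) (cyc p j)) :
    i + 1 ≡ j [MOD p.length] ∨ j + 1 ≡ i [MOD p.length] := by
  have hn : 0 < p.length := by have := hc.three_le_length; omega
  have hadj := hi _ (cyc_mem p hn i) _ (cyc_mem p hn j) h
  rw [Walk.toSubgraph_adj_iff] at hadj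
  obtain ⟨t, ht, htl⟩ := hadj
  have hgv : ∀ s : ℕ, s ≤ p.length → p.getVert s = cyc p s := by
    intro s hs
    rcases eq_or_lt_of_le hs with rfl | hlt
    · unfold cyc; rw [Nat.mod_self, Walk.getVert_zero, Walk.getVert_length]
    · unfold cyc; rw [Nat.mod_eq_of_lt hlt]
  rw [hgv t htl.le, hgv (t+1) htl] at ht
  rcases Sym2.eq_iff.mp ht with ⟨h1, h2⟩ | ⟨h1, h2⟩
  · left
    exact ((cyc_inj hc h1).add_right 1).symm.trans (cyc_inj hc h2)
  · right
    exact ((cyc_inj hc h1).add_right 1).symm.trans (cyc_inj hc h2)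



def mapWalk (φ : A → B) (S : Set A)
    (hS : ∀ x ∈ S, ∀ y ∈ S, K.Adj x y → T.Adj (φ x) (φ y)) :
    ∀ {u v : A} (p : K.Walk u v), (∀ x ∈ p.support, x ∈ S) → T.Walk (φ u) (φ v)
  | _, _, Walk.nil, _ => Walk.nil
  | _, _, Walk.cons h q, hs =>
      Walk.cons (hS _ (hs _ (by simp)) _ (hs _ (by simp)) h)
        (mapWalk φ S hS q (fun x hx => hs x (by simp [hx])))

@[simp] lemma support_mapWalk (φ : A → B) (S : Set A) (hS) {u v : A} (p : K.Walk u v) (hs) :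
    (mapWalk (T := T) φ S hS p hs).support = p.support.map φ := by
  induction p with
  | nil => simp [mapWalk]
  | cons h q ih => simp [mapWalk, ih]

@[simp] lemma length_mapWalk (φ : A → B) (S : Set A) (hS) {u v : A} (p : K.Walk u v) (hs) :
    (mapWalk (T := T) φ S hS p hs).length = p.length := by
  induction p with
  | nil => simp [mapWalk]
  | cons h q ih => simp [mapWalk, ih]

@[simp] lemma edges_mapWalk (φ : A → B) (S : Set A) (hS) {u v : A} (p : K.Walk u v) (hs) :
    (mapWalk (T := T) φ S hS p hs).edges = p.edges.map (Sym2.map φ) := by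
  induction p with
  | nil => simp [mapWalk]
  | cons h q ih => simp [mapWalk, ih]

lemma mapWalk_toSubgraph_adj (φ : A → B) (S : Set A) (hS) {u v : A} (p : K.Walk u v) (hs)
    {x y : A} (h : p.toSubgraph.Adj x y) :
    (mapWalk (T := T) φ S hS p hs).toSubgraph.Adj (φ x) (φ y) := by
  induction p with
  | nil => simp only [Walk.toSubgraph, singletonSubgraph_adj, Pi.bot_apply] at h; exact h.elim
  | cons hadj q ih =>
      simp only [Walk.toSubgraph, Subgraph.sup_adj, subgraphOfAdj_adj] at h ⊢
      rcases h with h | h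
      · left
        rcases Sym2.eq_iff.mp h with ⟨rfl, rfl⟩ | ⟨rfl, rfl⟩
        · rfl
        · exact Sym2.eq_swap
      · exact Or.inr (ih _ h)

lemma transfer_cycle (φ : A → B) {v : A} (p : K.Walk v v) (hc : p.IsCycle)
    (hi : IsInducedWalk K p)
    (hinj : ∀ x ∈ p.support, ∀ y ∈ p.support, φ x = φ y → x = y)
    (hfwd : ∀ x ∈ p.support, ∀ y ∈ p.support, K.Adj x y → T.Adj (φ x) (φ y))
    (hbwd : ∀ x ∈ p.support, ∀ y ∈ p.support, T.Adj (φ x) (φ y) → K.Adj x y) :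
    ∃ q : T.Walk (φ v) (φ v), q.IsCycle ∧ IsInducedWalk T q ∧ q.length = p.length := by
  set S : Set A := {x | x ∈ p.support} with hSdef
  have hS : ∀ x ∈ S, ∀ y ∈ S, K.Adj x y → T.Adj (φ x) (φ y) := hfwd
  set q := mapWalk φ S hS p (fun x hx => hx) with hq
  refine ⟨q, ?_, ?_, length_mapWalk ..⟩
  · rw [Walk.isCycle_def, Walk.isTrail_def]
    refine ⟨?_, ?_, ?_⟩
    · rw [edges_mapWalk]
      refine List.Nodup.map_on ?_ hc.isTrail.edges_nodup
      intro e1 he1 e2 he2 heq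
      induction e1 with
      | h a b =>
        induction e2 with
        | h c d =>
          simp only [Sym2.map_pair_eq, Sym2.eq_iff] at heq
          have ha := p.fst_mem_support_of_mem_edges he1
          have hb := p.snd_mem_support_of_mem_edges he1
          have hcm := p.fst_mem_support_of_mem_edges he2
          have hdm := p.snd_mem_support_of_mem_edges he2
          rcases heq with ⟨h1, h2⟩ | ⟨h1, h2⟩
          · rw [hinj _ ha _ hcm h1, hinj _ hb _ hdm h2]
          · rw [hinj _ ha _ hdm h1, hinj _ hb _ hcm h2, Sym2.eq_swap]
    · intro hnil
      have := hc.three_le_length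
      have : q.length = 0 := by rw [hnil]; rfl
      rw [length_mapWalk] at this
      omega
    · have hsup : q.support = p.support.map φ := support_mapWalk ..
      have : q.support.tail = p.support.tail.map φ := by
        rw [hsup]
        conv_lhs => rw [p.support_eq_cons]
        rfl
      rw [this]
      refine List.Nodup.map_on ?_ hc.2
      intro x hx y hy hxy
      exact hinj _ (List.mem_of_mem_tail hx) _ (List.mem_of_mem_tail hy) hxy
  · intro a ha b hb hab
    rw [support_mapWalk] at ha hb
    obtain ⟨x, hx, rfl⟩ := List.mem_map.mp ha
    obtain ⟨y, hy, rfl⟩ := List.mem_map.mp hb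
    exact mapWalk_toSubgraph_adj φ S hS p _ (hi _ hx _ hy (hbwd _ hx _ hy hab))



lemma noLongHole_lexProd {G : SimpleGraph A} {H : SimpleGraph B}
    (hG : NoLongHole G) (hH : NoLongHole H) : NoLongHole (lexProd G H) := by
  intro v p hc hi hlen
  have hn3 : 3 ≤ p.length := hc.three_le_length
  have hn0 : 0 < p.length := by omega
  by_cases hfib : ∀ x ∈ p.support, x.1 = v.1
  · obtain ⟨q, qc, qi, ql⟩ := transfer_cycle Prod.snd p hc hi
      (fun x hx y hy hxy => Prod.ext ((hfib x hx).trans (hfib y hy).symm) hxy)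
      (fun x hx y hy hxy => by
        rcases lexProd_adj.mp hxy with h | ⟨-, h⟩
        · rw [hfib x hx, hfib y hy] at h
          exact absurd h (G.loopless.irrefl _)
        · exact h)
      (fun x hx y hy hxy => lexProd_adj.mpr (Or.inr ⟨(hfib x hx).trans (hfib y hy).symm, hxy⟩))
    exact hH _ q qc qi (by omega)
  · push_neg at hfib
    obtain ⟨z, hzmem, hz⟩ := hfib
    have claim : ∀ x ∈ p.support, ∀ y ∈ p.support, x.1 = y.1 → x = y := by
      intro x hx y hy hxy1
      by_contra hne
      obtain ⟨z₀, hz₀mem, hz₀⟩ : ∃ z₀ ∈ p.support, z₀.1 ≠ x.1 := by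
        by_cases hAv : x.1 = v.1
        · exact ⟨z, hzmem, by rw [hAv]; exact hz⟩
        · exact ⟨v, p.start_mem_support, fun h => hAv h.symm⟩
      obtain ⟨i, hi', hxi⟩ := mem_cyc hn0 hx
      obtain ⟨j, hj', hyj⟩ := mem_cyc hn0 hy
      obtain ⟨l, hl', hzl⟩ := mem_cyc hn0 hz₀mem
      have hbound : ∃ m < p.length, (cyc p m).1 = x.1 ∧ (cyc p (m+1)).1 ≠ x.1 := by
        by_contra hcon
        push_neg at hcon
        have step : ∀ m : ℕ, (cyc p m).1 = x.1 → (cyc p (m+1)).1 = x.1 := by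
          intro m hm
          have e1 : cyc p m = cyc p (m % p.length) := cyc_congr p (Nat.mod_modEq m _).symm
          have e2 : cyc p (m+1) = cyc p (m % p.length + 1) :=
            cyc_congr p (((Nat.mod_modEq m _).symm).add_right 1)
          rw [e2]
          exact hcon (m % p.length) (Nat.mod_lt _ hn0) (by rw [← e1]; exact hm)
        have hall : ∀ d : ℕ, (cyc p (i + d)).1 = x.1 := by
          intro d
          induction d with
          | zero => rw [Nat.add_zero, ← hxi]
          | succ d ih =>
              rw [← Nat.add_assoc]
              exact step _ ih
        apply hz₀
        have e3 : cyc p (i + (p.length - i + l)) = cyc p l := by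
          apply cyc_congr
          show (i + (p.length - i + l)) % p.length = l % p.length
          have e4 : i + (p.length - i + l) = p.length + l := by omega
          rw [e4, Nat.add_mod_left]
        rw [hzl, ← e3]
        exact hall _
      obtain ⟨m, hm', hmA, hmB⟩ := hbound
      have hGab : G.Adj x.1 (cyc p (m+1)).1 := by
        rcases lexProd_adj.mp (cyc_adj hn3 m) with h | ⟨h1, -⟩
        · rw [hmA] at h; exact h
        · exact absurd (h1.symm.trans hmA) hmB
      have inFiber : ∀ t, (cyc p t).1 = x.1 →
          t ≡ m [MOD p.length] ∨ t ≡ m + 2 [MOD p.length] := by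
        intro t ht
        have hadj : (lexProd G H).Adj (cyc p (m+1)) (cyc p t) :=
          lexProd_adj.mpr (Or.inl (by rw [ht]; exact hGab.symm))
        rcases cyc_consec hc hi hadj with h | h
        · right; exact h.symm
        · left; exact Nat.ModEq.add_right_cancel' 1 h
      have hiA : i ≡ m [MOD p.length] ∨ i ≡ m+2 [MOD p.length] := inFiber i (by rw [← hxi])
      have hjA : j ≡ m [MOD p.length] ∨ j ≡ m+2 [MOD p.length] :=
        inFiber j (by rw [← hyj]; exact hxy1.symm)
      have hij : ¬ i ≡ j [MOD p.length] := fun h => hne (by rw [hxi, hyj, cyc_congr p h])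
      have hkey : (cyc p (m+2)).1 = x.1 := by
        rcases hiA with h1 | h1
        · rcases hjA with h2 | h2
          · exact absurd (h1.trans h2.symm) hij
          · rw [← cyc_congr p h2, ← hyj]; exact hxy1.symm
        · rw [← cyc_congr p h1, ← hxi]
      have hm3 : (cyc p (m+3)).1 ≠ x.1 := by
        intro h
        rcases inFiber (m+3) h with h' | h'
        · have hd := (Nat.modEq_iff_dvd' (by omega : m ≤ m + 3)).mp h'.symm
          have := Nat.le_of_dvd (by omega) hd; omega
        · have hd := (Nat.modEq_iff_dvd' (by omega : m + 2 ≤ m + 3)).mp h'.symm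
          have := Nat.le_of_dvd (by omega) hd; omega
      have hb3 : G.Adj x.1 (cyc p (m+3)).1 := by
        rcases lexProd_adj.mp (cyc_adj hn3 (m+2)) with h | ⟨h1, -⟩
        · rw [hkey] at h; exact h
        · exact absurd (h1.symm.trans hkey) hm3
      have hadj : (lexProd G H).Adj (cyc p (m+3)) (cyc p m) :=
        lexProd_adj.mpr (Or.inl (by rw [hmA]; exact hb3.symm))
      rcases cyc_consec hc hi hadj with h | h
      · have hd := (Nat.modEq_iff_dvd' (by omega : m ≤ m + 3 + 1)).mp h.symm
        have := Nat.le_of_dvd (by omega) hd; omega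
      · have hd := (Nat.modEq_iff_dvd' (by omega : m + 1 ≤ m + 3)).mp h
        have := Nat.le_of_dvd (by omega) hd; omega
    obtain ⟨q, qc, qi, ql⟩ := transfer_cycle Prod.fst p hc hi claim
      (fun x hx y hy hxy => by
        rcases lexProd_adj.mp hxy with h | ⟨h1, h2⟩
        · exact h
        · have hcl := claim x hx y hy h1
          subst hcl
          exact absurd h2 (H.loopless.irrefl _))
      (fun x hx y hy hxy => lexProd_adj.mpr (Or.inl hxy))
    exact hG _ q qc qi (by omega)



lemma C7bar_no3indep : ∀ a b c : ZMod 7, a ≠ b → a ≠ c → b ≠ c →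
    ¬C7bar.Adj a b → ¬C7bar.Adj a c → ¬C7bar.Adj b c → False := by decide


lemma C7bar_noC5 : ∀ a b c d e : ZMod 7, ¬(C7bar.Adj a b ∧ C7bar.Adj b c ∧ C7bar.Adj c d ∧
    C7bar.Adj d e ∧ C7bar.Adj e a ∧ ¬C7bar.Adj a c ∧ ¬C7bar.Adj a d ∧ ¬C7bar.Adj b d ∧
    ¬C7bar.Adj b e ∧ ¬C7bar.Adj c e) := by decide


lemma noLongHole_C7bar : NoLongHole C7bar := by
  intro v p hc hi hlen
  have hn3 : 3 ≤ p.length := hc.three_le_length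
  have hn0 : 0 < p.length := by omega
  have hne : ∀ i j : ℕ, ¬ i ≡ j [MOD p.length] → cyc p i ≠ cyc p j :=
    fun i j h he => h (cyc_inj hc he)
  have hnadj : ∀ i j : ℕ, ¬ (i + 1) ≡ j [MOD p.length] → ¬ (j + 1) ≡ i [MOD p.length] →
      ¬ C7bar.Adj (cyc p i) (cyc p j) := by
    intro i j h1 h2 hadj
    rcases cyc_consec hc hi hadj with h | h
    · exact h1 h
    · exact h2 h
  have hle7 : p.length ≤ 7 := by
    have hmono := Finset.card_le_card_of_injOn (fun i => cyc p i)
      (fun x _ => Finset.mem_univ (α := ZMod 7) _)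
      (s := Finset.range p.length)
      (fun a ha b hb h => by
        simp only [Finset.coe_range, Set.mem_Iio] at ha hb
        have hm := cyc_inj hc h
        unfold Nat.ModEq at hm
        rwa [Nat.mod_eq_of_lt ha, Nat.mod_eq_of_lt hb] at hm)
    rw [Finset.card_range, Finset.card_univ, ZMod.card] at hmono
    exact hmono
  obtain h5 | h6 | h7 : p.length = 5 ∨ p.length = 6 ∨ p.length = 7 := by omega
  · have e50 : cyc p 5 = cyc p 0 := cyc_congr p (by rw [h5]; decide)
    have A40 : C7bar.Adj (cyc p 4) (cyc p 0) := by
      have := cyc_adj hn3 4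
      rwa [e50] at this
    exact C7bar_noC5 (cyc p 0) (cyc p 1) (cyc p 2) (cyc p 3) (cyc p 4)
      ⟨cyc_adj hn3 0, cyc_adj hn3 1, cyc_adj hn3 2, cyc_adj hn3 3, A40,
       hnadj 0 2 (by rw [h5]; decide) (by rw [h5]; decide),
       hnadj 0 3 (by rw [h5]; decide) (by rw [h5]; decide),
       hnadj 1 3 (by rw [h5]; decide) (by rw [h5]; decide),
       hnadj 1 4 (by rw [h5]; decide) (by rw [h5]; decide),
       hnadj 2 4 (by rw [h5]; decide) (by rw [h5]; decide)⟩
  · exact C7bar_no3indep (cyc p 0) (cyc p 2) (cyc p 4)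
      (hne 0 2 (by rw [h6]; decide)) (hne 0 4 (by rw [h6]; decide))
      (hne 2 4 (by rw [h6]; decide))
      (hnadj 0 2 (by rw [h6]; decide) (by rw [h6]; decide))
      (hnadj 0 4 (by rw [h6]; decide) (by rw [h6]; decide))
      (hnadj 2 4 (by rw [h6]; decide) (by rw [h6]; decide))
  · exact C7bar_no3indep (cyc p 0) (cyc p 2) (cyc p 4)
      (hne 0 2 (by rw [h7]; decide)) (hne 0 4 (by rw [h7]; decide))
      (hne 2 4 (by rw [h7]; decide))
      (hnadj 0 2 (by rw [h7]; decide) (by rw [h7]; decide))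
      (hnadj 0 4 (by rw [h7]; decide) (by rw [h7]; decide))
      (hnadj 2 4 (by rw [h7]; decide) (by rw [h7]; decide))


/-- every "independent-ish" finset has card ≤ m -/
def IndepBound (G : SimpleGraph A) (m : ℕ) : Prop :=
  ∀ s : Finset A, (∀ x ∈ s, ∀ y ∈ s, x ≠ y → ¬ G.Adj x y) → s.card ≤ m

lemma C7bar_indepBound : IndepBound C7bar 2 := by
  intro s hs
  revert hs
  revert s
  decide

lemma unit_indepBound : IndepBound (⊥ : SimpleGraph Unit) 1 := by
  intro s _
  exact Finset.card_le_one.mpr (fun a _ b _ => Subsingleton.elim a b)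

lemma indepBound_lexProd {G : SimpleGraph A} {H : SimpleGraph B} {a b : ℕ}
    (hG : IndepBound G a) (hH : IndepBound H b) : IndepBound (lexProd G H) (b * a) := by
  classical
  intro u hu
  have hbound : u.card ≤ b * (u.image Prod.fst).card := by
    apply Finset.card_le_mul_card_image
    intro c hc
    have hfib : ∀ x ∈ u.filter (fun x => x.1 = c), ∀ y ∈ u.filter (fun x => x.1 = c),
        x.2 = y.2 → x = y := by
      intro x hx y hy hxy
      rw [Finset.mem_filter] at hx hy
      exact Prod.ext (hx.2.trans hy.2.symm) hxy
    have hcard : (u.filter (fun x => x.1 = c)).card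
        = ((u.filter (fun x => x.1 = c)).image Prod.snd).card :=
      (Finset.card_image_of_injOn (fun x hx y hy => hfib x hx y hy)).symm
    rw [hcard]
    apply hH
    intro x2 hx2 y2 hy2 hne hadj
    obtain ⟨x, hx, rfl⟩ := Finset.mem_image.mp hx2
    obtain ⟨y, hy, rfl⟩ := Finset.mem_image.mp hy2
    have hxy : x ≠ y := fun h => hne (by rw [h])
    have hxm := Finset.mem_filter.mp hx
    have hym := Finset.mem_filter.mp hy
    exact hu x hxm.1 y hym.1 hxy (lexProd_adj.mpr (Or.inr ⟨hxm.2.trans hym.2.symm, hadj⟩))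
  refine hbound.trans ?_
  have himg : (u.image Prod.fst).card ≤ a := by
    apply hG
    intro c1 hc1 c2 hc2 hne hadj
    obtain ⟨x, hx, rfl⟩ := Finset.mem_image.mp hc1
    obtain ⟨y, hy, rfl⟩ := Finset.mem_image.mp hc2
    have hxy : x ≠ y := fun h => hne (by rw [h])
    exact hu x hx y hy hxy (lexProd_adj.mpr (Or.inl hadj))
  exact Nat.mul_le_mul_left b himg

lemma card_le_of_colorable [Fintype A] {G : SimpleGraph A} {m n : ℕ} (hb : IndepBound G m)
    (hc : G.Colorable n) : Fintype.card A ≤ m * n := by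
  classical
  obtain ⟨c⟩ := hc
  have := Finset.card_le_mul_card_image_of_maps_to
    (f := fun x => c x) (s := Finset.univ) (t := Finset.univ)
    (fun x _ => Finset.mem_univ _) m
    (fun i _ => by
      apply hb
      intro x hx y hy hne hadj
      rw [Finset.mem_filter] at hx hy
      exact c.valid hadj (hx.2.trans hy.2.symm))
  simpa using this

-- clique numbers
lemma cliqueNum_lexProd [Fintype A] [Fintype B] (G : SimpleGraph A) (H : SimpleGraph B) :
    (lexProd G H).cliqueNum = G.cliqueNum * H.cliqueNum := by
  classical
  apply le_antisymm
  · obtain ⟨u, hu⟩ := (lexProd G H).exists_isNClique_cliqueNum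
    rw [← hu.card_eq]
    have hbound : u.card ≤ H.cliqueNum * (u.image Prod.fst).card := by
      apply Finset.card_le_mul_card_image
      intro c hc
      have hcard : (u.filter (fun x => x.1 = c)).card
          = ((u.filter (fun x => x.1 = c)).image Prod.snd).card := by
        refine (Finset.card_image_of_injOn ?_).symm
        intro x hx y hy hxy
        rw [Finset.mem_coe, Finset.mem_filter] at hx hy
        exact Prod.ext (hx.2.trans hy.2.symm) hxy
      rw [hcard]
      have hclq : H.IsClique ((u.filter (fun x => x.1 = c)).image Prod.snd) := by
        intro x2 hx2 y2 hy2 hne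
        rw [Finset.mem_coe, Finset.mem_image] at hx2 hy2
        obtain ⟨x, hx, rfl⟩ := hx2
        obtain ⟨y, hy, rfl⟩ := hy2
        have hxm := Finset.mem_filter.mp hx
        have hym := Finset.mem_filter.mp hy
        have hxy : x ≠ y := fun h => hne (by rw [h])
        have := hu.isClique hxm.1 hym.1 hxy
        rcases lexProd_adj.mp this with h | ⟨-, h⟩
        · rw [hxm.2, hym.2] at h
          exact absurd h (G.loopless.irrefl _)
        · exact h
      exact IsClique.card_le_cliqueNum (tc := hclq)
    refine hbound.trans ?_
    rw [mul_comm]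
    apply Nat.mul_le_mul_right
    have hclq : G.IsClique (u.image Prod.fst) := by
      intro c1 hc1 c2 hc2 hne
      rw [Finset.mem_coe, Finset.mem_image] at hc1 hc2
      obtain ⟨x, hx, rfl⟩ := hc1
      obtain ⟨y, hy, rfl⟩ := hc2
      have hxy : x ≠ y := fun h => hne (by rw [h])
      rcases lexProd_adj.mp (hu.isClique hx hy hxy) with h | ⟨h1, -⟩
      · exact h
      · exact absurd h1 hne
    exact IsClique.card_le_cliqueNum (tc := hclq)
  · obtain ⟨s, hs⟩ := G.exists_isNClique_cliqueNum
    obtain ⟨t, ht⟩ := H.exists_isNClique_cliqueNum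
    have hclq : (lexProd G H).IsClique (↑(s ×ˢ t) : Set (A × B)) := by
      intro x hx y hy hne
      rw [Finset.mem_coe, Finset.mem_product] at hx hy
      by_cases h1 : x.1 = y.1
      · have h2 : x.2 ≠ y.2 := fun h => hne (Prod.ext h1 h)
        exact lexProd_adj.mpr (Or.inr ⟨h1, ht.isClique hx.2 hy.2 h2⟩)
      · exact lexProd_adj.mpr (Or.inl (hs.isClique hx.1 hy.1 h1))
    have := IsClique.card_le_cliqueNum (tc := hclq)
    rwa [Finset.card_product, hs.card_eq, ht.card_eq] at this

lemma cliqueNum_C7bar : C7bar.cliqueNum = 3 := by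
  apply le_antisymm
  · obtain ⟨s, hs⟩ := C7bar.exists_isNClique_cliqueNum
    rw [← hs.card_eq]
    have : ∀ s : Finset (ZMod 7), (∀ x ∈ s, ∀ y ∈ s, x ≠ y → C7bar.Adj x y) → s.card ≤ 3 := by
      decide
    exact this s (fun x hx y hy hne => hs.isClique hx hy hne)
  · have hcl : C7bar.IsNClique 3 ({0, 2, 4} : Finset (ZMod 7)) := by
      constructor
      · intro x hx y hy hne
        rw [Finset.mem_coe] at hx hy
        fin_cases hx <;> fin_cases hy <;> first | (exact absurd rfl hne) | decide
      · decide
    have := IsClique.card_le_cliqueNum (tc := hcl.isClique)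
    rwa [hcl.card_eq] at this

lemma cliqueNum_unit : (⊥ : SimpleGraph Unit).cliqueNum = 1 := by
  apply le_antisymm
  · obtain ⟨s, hs⟩ := (⊥ : SimpleGraph Unit).exists_isNClique_cliqueNum
    rw [← hs.card_eq]
    exact Finset.card_le_one.mpr (fun a _ b _ => Subsingleton.elim a b)
  · have hcl : (⊥ : SimpleGraph Unit).IsNClique 1 {()} := by
      constructor
      · intro x hx y hy hne
        exact absurd (Subsingleton.elim x y) hne
      · rfl
    have := IsClique.card_le_cliqueNum (tc := hcl.isClique)
    rwa [hcl.card_eq] at this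



def Wt : ℕ → Type
  | 0 => Unit
  | (k+1) => ZMod 7 × Wt k

instance WtFintype : ∀ k, Fintype (Wt k)
  | 0 => inferInstanceAs (Fintype Unit)
  | (k+1) => letI := WtFintype k; inferInstanceAs (Fintype (ZMod 7 × Wt k))

def Gg : ∀ k, SimpleGraph (Wt k)
  | 0 => ⊥
  | (k+1) => lexProd C7bar (Gg k)

lemma card_Wt : ∀ k, Fintype.card (Wt k) = 7 ^ k
  | 0 => rfl
  | (k+1) => by
      have ih := card_Wt k
      show Fintype.card (ZMod 7 × Wt k) = 7 ^ (k+1)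
      rw [Fintype.card_prod, ZMod.card, ih, pow_succ]
      ring

lemma noLong_Gg : ∀ k, NoLongHole (Gg k)
  | 0 => fun _ _ hc _ _ => hc.ne_bot rfl
  | (k+1) => noLongHole_lexProd noLongHole_C7bar (noLong_Gg k)

lemma cliqueNum_Gg : ∀ k, (Gg k).cliqueNum = 3 ^ k
  | 0 => cliqueNum_unit
  | (k+1) => by
      show (lexProd C7bar (Gg k)).cliqueNum = _
      rw [cliqueNum_lexProd, cliqueNum_C7bar, cliqueNum_Gg k, pow_succ]
      ring

lemma indep_Gg : ∀ k, IndepBound (Gg k) (2 ^ k)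
  | 0 => unit_indepBound
  | (k+1) => by
      have h := indepBound_lexProd C7bar_indepBound (indep_Gg k)
      rw [pow_succ]
      exact h

lemma chrom_Gg (k n : ℕ) (hc : (Gg k).Colorable n) : 7 ^ k ≤ 2 ^ k * n := by
  have h := card_le_of_colorable (indep_Gg k) hc
  rw [card_Wt] at h
  calc 7 ^ k ≤ 2 ^ k * n := by rw [mul_comm] at h ⊢; exact h

end StmtAux

section FinalThm
open SimpleGraph

lemma hasOddHole_false (k : ℕ) : ¬ HasOddHole (Gg k) := by
  rintro ⟨v, p, hc, hi, -, hlen⟩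
  exact noLong_Gg k v p hc hi hlen

lemma chrom_enat (k : ℕ) :
    ((7 ^ k : ℕ) : ℕ∞) ≤ ((2 ^ k : ℕ) : ℕ∞) * (Gg k).chromaticNumber := by
  have hfin : (Gg k).Colorable (Fintype.card (Wt k)) := (Gg k).colorable_of_fintype
  have hne : (Gg k).chromaticNumber ≠ ⊤ := chromaticNumber_ne_top_iff_exists.mpr ⟨_, hfin⟩
  have hcol : (Gg k).Colorable (Gg k).chromaticNumber.toNat := (Gg k).colorable_chromaticNumber hfin
  have hb := chrom_Gg k _ hcol
  calc ((7 ^ k : ℕ) : ℕ∞) ≤ ((2 ^ k * (Gg k).chromaticNumber.toNat : ℕ) : ℕ∞) := by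
        exact_mod_cast hb
    _ = ((2 ^ k : ℕ) : ℕ∞) * ((Gg k).chromaticNumber.toNat : ℕ∞) := by push_cast; rfl
    _ = ((2 ^ k : ℕ) : ℕ∞) * (Gg k).chromaticNumber := by rw [ENat.coe_toNat hne]


end FinalThm

theorem stmt11 :
    ∃ (W : ℕ → Type) (_ : ∀ k, Fintype (W k)) (G : ∀ k, SimpleGraph (W k)),
      (∀ k, ¬ HasOddHole (G k)) ∧
      (∀ k, (G k).cliqueNum = 3 ^ k) ∧
      (∀ k, ((7 ^ k : ℕ) : ℕ∞) ≤ ((2 ^ k : ℕ) : ℕ∞) * (G k).chromaticNumber) ∧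
      (∀ α : ℝ, α < Real.log (7 / 2) / Real.log 3 → ∀ N : ℕ, ∃ k,
         N ≤ (G k).cliqueNum ∧
         ∀ n : ℕ, (G k).Colorable n → ((G k).cliqueNum : ℝ) ^ α ≤ (n : ℝ)) := by
  refine ⟨Wt, WtFintype, Gg, hasOddHole_false, cliqueNum_Gg, chrom_enat, ?_⟩
  intro a ha N
  refine ⟨N, ?_, ?_⟩
  · rw [cliqueNum_Gg]
    exact (Nat.lt_pow_self (by norm_num : 1 < 3) : N < 3 ^ N).le
  · intro n hn
    have hb := chrom_Gg N n hn
    rw [cliqueNum_Gg]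
    have hlog3 : (0:ℝ) < Real.log 3 := Real.log_pos (by norm_num)
    have ha' : a * Real.log 3 < Real.log (7/2) := (lt_div_iff₀ hlog3).mp ha
    have key : (((3:ℕ)^N : ℕ) : ℝ) ^ a ≤ ((7:ℝ)/2) ^ (N:ℕ) := by
      have h3 : (((3:ℕ)^N : ℕ) : ℝ) = (3:ℝ) ^ (N:ℕ) := by push_cast; ring
      rw [h3, ← Real.rpow_natCast (3:ℝ) N, ← Real.rpow_natCast ((7:ℝ)/2) N,
        ← Real.rpow_mul (by norm_num : (0:ℝ) ≤ 3)]
      rw [Real.rpow_def_of_pos (by norm_num : (0:ℝ) < 3),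
        Real.rpow_def_of_pos (by norm_num : (0:ℝ) < 7/2)]
      apply Real.exp_le_exp.mpr
      have hN : (0:ℝ) ≤ (N:ℝ) := Nat.cast_nonneg N
      nlinarith [ha'.le, hN]
    have h72 : ((7:ℝ)/2) ^ (N:ℕ) ≤ (n:ℝ) := by
      rw [div_pow, div_le_iff₀ (by positivity : (0:ℝ) < 2 ^ N)]
      calc (7:ℝ) ^ N = ((7 ^ N : ℕ) : ℝ) := by push_cast; ring
        _ ≤ ((2 ^ N * n : ℕ) : ℝ) := by exact_mod_cast hb
        _ = (n:ℝ) * 2 ^ N := by push_cast; ring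
    exact key.trans h72
end

section
/- If a graph G has no odd hole, (L0, …, Lk) is a levelling in G with G[Lk] connected, and u, v are distinct vertices of L(k−1) each having a neighbour in Lk, with L(k−1) stable, then all induced paths between u and v with interior contained in L0 ∪ ⋯ ∪ L(k−2) have the same parity. -/
open SimpleGraph

universe u

variable {V : Type u}

/-- Any walk of length at most 1 between distinct vertices consists of the single edge. -/
lemma edge_mem_of_length_le_one {G : SimpleGraph V} {a b : V} (t : G.Walk a b)
    (hne : a ≠ b) (hlen : t.length ≤ 1) : s(a, b) ∈ t.edges := by
  cases t with
  | nil => exact absurd rfl hne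
  | cons h t' =>
    cases t' with
    | nil => simp
    | cons h' t'' => simp [SimpleGraph.Walk.length_cons] at hlen

lemma two_le_length_of_not_adj {G : SimpleGraph V} {a b : V} (t : G.Walk a b)
    (hne : a ≠ b) (hnadj : ¬ G.Adj a b) : 2 ≤ t.length := by
  by_contra h
  push_neg at h
  exact hnadj (Walk.adj_of_mem_edges t (edge_mem_of_length_le_one t hne (by omega)))

/-- A minimum-length walk has no chords: any edge between support vertices is a walk edge. -/
lemma min_walk_induced {W : Type*} [DecidableEq W] {H : SimpleGraph W} {a b : W} (w : H.Walk a b)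
    (hmin : ∀ t : H.Walk a b, w.length ≤ t.length) :
    ∀ x ∈ w.support, ∀ y ∈ w.support, H.Adj x y → s(x, y) ∈ w.edges := by
  intro x hx y hy hadj
  have hspec := w.take_spec hx
  have hlen : (w.takeUntil x hx).length + (w.dropUntil x hx).length = w.length := by
    have := congrArg Walk.length hspec
    rwa [Walk.length_append] at this
  by_cases hyd : y ∈ (w.dropUntil x hx).support
  · have hmin' := hmin ((w.takeUntil x hx).append
      (Walk.cons hadj ((w.dropUntil x hx).dropUntil y hyd)))
    rw [Walk.length_append, Walk.length_cons] at hmin'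
    have hlen2 : ((w.dropUntil x hx).takeUntil y hyd).length
        + ((w.dropUntil x hx).dropUntil y hyd).length = (w.dropUntil x hx).length := by
      have := congrArg Walk.length ((w.dropUntil x hx).take_spec hyd)
      rwa [Walk.length_append] at this
    have h1 : ((w.dropUntil x hx).takeUntil y hyd).length ≤ 1 := by omega
    have := edge_mem_of_length_le_one _ hadj.ne h1
    exact (Walk.edges_dropUntil_subset w hx) ((Walk.edges_takeUntil_subset _ hyd) this)
  · have hyw1 : y ∈ (w.takeUntil x hx).support := by
      have hy' := hy
      rw [← hspec, Walk.mem_support_append_iff] at hy'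
      exact hy'.resolve_right hyd
    have hmin' := hmin (((w.takeUntil x hx).takeUntil y hyw1).append
      (Walk.cons hadj.symm (w.dropUntil x hx)))
    rw [Walk.length_append, Walk.length_cons] at hmin'
    have hlen2 : ((w.takeUntil x hx).takeUntil y hyw1).length
        + ((w.takeUntil x hx).dropUntil y hyw1).length = (w.takeUntil x hx).length := by
      have := congrArg Walk.length ((w.takeUntil x hx).take_spec hyw1)
      rwa [Walk.length_append] at this
    have h1 : ((w.takeUntil x hx).dropUntil y hyw1).length ≤ 1 := by omega
    have h2 := edge_mem_of_length_le_one _ hadj.ne.symm h1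
    have h3 : s(y, x) ∈ w.edges :=
      (Walk.edges_takeUntil_subset w hx) ((Walk.edges_dropUntil_subset _ hyw1) h2)
    rwa [Sym2.eq_swap] at h3

theorem stmt13 [Fintype V] (G : SimpleGraph V) (k : ℕ) (L : ℕ → Set V)
    (hnoodd : ¬ HasOddHole G) (hlev : IsLevelling G k L)
    (hconn : (G.induce (L k)).Connected)
    (hstable : ∀ x ∈ L (k - 1), ∀ y ∈ L (k - 1), ¬ G.Adj x y)
    (u v : V) (hu : u ∈ L (k - 1)) (hv : v ∈ L (k - 1)) (huv : u ≠ v)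
    (hun : ∃ x ∈ L k, G.Adj u x) (hvn : ∃ x ∈ L k, G.Adj v x)
    (p q : G.Walk u v)
    (hp : IsInducedPath G p) (hpint : InteriorIn G p (lowerLevels L (k - 1)))
    (hq : IsInducedPath G q) (hqint : InteriorIn G q (lowerLevels L (k - 1))) :
    (Odd p.length ↔ Odd q.length) := by
  classical
  obtain ⟨hdisj, ⟨x0, hL0⟩, hprop⟩ := hlev
  have hk2 : 2 ≤ k := by
    rcases Nat.lt_or_ge k 2 with hk | hk
    · exfalso
      have h1 : k - 1 = 0 := by omega
      rw [h1, hL0, Set.mem_singleton_iff] at hu hv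
      exact huv (hu.trans hv.symm)
    · exact hk
  have hnadjuv : ¬ G.Adj u v := hstable u hu v hv
  -- no vertex of the lower levels lies in L (k-1) or L k
  have hlowdisj : ∀ z ∈ lowerLevels L (k - 1), ∀ j, k - 1 ≤ j → j ≤ k → z ∉ L j := by
    intro z hz j hj1 hj2 hzj
    simp only [lowerLevels, Set.mem_iUnion] at hz
    obtain ⟨i, hi, hzi⟩ := hz
    rw [Finset.mem_range] at hi
    exact Set.disjoint_left.mp (hdisj i j (by omega) hj2 (by omega)) hzi hzj
  -- no edges between lower levels and L k
  have hnoadjlow : ∀ z ∈ lowerLevels L (k - 1), ∀ y ∈ L k, ¬ G.Adj z y := by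
    intro z hz y hy hadj
    simp only [lowerLevels, Set.mem_iUnion] at hz
    obtain ⟨i, hi, hzi⟩ := hz
    rw [Finset.mem_range] at hi
    exact (hprop k (by omega) le_rfl y hy).2 i (by omega) z hzi hadj
  -- construct an induced path R from u to v with interior in L k
  set S : Set V := insert u (insert v (L k)) with hS
  have huS : u ∈ S := Set.mem_insert _ _
  have hvS : v ∈ S := Set.mem_insert_of_mem _ (Set.mem_insert _ _)
  have hLkS : L k ⊆ S := fun z hz => Set.mem_insert_of_mem _ (Set.mem_insert_of_mem _ hz)
  obtain ⟨xu, hxu, haxu⟩ := hun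
  obtain ⟨xv, hxv, haxv⟩ := hvn
  have hreach : (G.induce S).Reachable ⟨u, huS⟩ ⟨v, hvS⟩ := by
    have h1 : (G.induce S).Adj ⟨u, huS⟩ ⟨xu, hLkS hxu⟩ := haxu
    have h2 : (G.induce S).Adj ⟨xv, hLkS hxv⟩ ⟨v, hvS⟩ := haxv.symm
    have hmid : (G.induce S).Reachable ⟨xu, hLkS hxu⟩ ⟨xv, hLkS hxv⟩ := by
      have hr := hconn.preconnected ⟨xu, hxu⟩ ⟨xv, hxv⟩
      let f : G.induce (L k) →g G.induce S :=
        ⟨fun a => ⟨a.1, hLkS a.2⟩, fun {a b} hab => hab⟩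
      exact hr.map f
    exact h1.reachable.trans (hmid.trans h2.reachable)
  obtain ⟨w0, hw0⟩ := hreach.exists_walk_length_eq_dist
  set wp := w0.bypass with hwp
  have hwp_path : wp.IsPath := Walk.bypass_isPath w0
  have hwp_min : ∀ t : (G.induce S).Walk ⟨u, huS⟩ ⟨v, hvS⟩, wp.length ≤ t.length := by
    intro t
    calc wp.length ≤ w0.length := Walk.length_bypass_le w0
    _ = _ := hw0
    _ ≤ t.length := dist_le t
  have hwp_ind := min_walk_induced wp hwp_min
  let g : G.induce S →g G := ⟨Subtype.val, fun {a b} hab => hab⟩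
  set R : G.Walk u v := wp.map g with hR
  have hRpath : R.IsPath := Walk.map_isPath_of_injective Subtype.val_injective hwp_path
  have hRmemS : ∀ z ∈ R.support, z ∈ S := by
    intro z hz
    rw [hR, Walk.support_map] at hz
    obtain ⟨a, _, rfl⟩ := List.mem_map.mp hz
    exact a.2
  have huR : u ∈ R.support := Walk.start_mem_support R
  have hvR : v ∈ R.support := Walk.end_mem_support R
  have hRint : ∀ z ∈ R.support, z ≠ u → z ≠ v → z ∈ L k := by
    intro z hz hzu hzv
    have := hRmemS z hz
    simp only [hS, Set.mem_insert_iff] at this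
    tauto
  have hRind : ∀ x ∈ R.support, ∀ y ∈ R.support, G.Adj x y → s(x, y) ∈ R.edges := by
    intro x hx y hy hadj
    rw [hR, Walk.support_map] at hx hy
    obtain ⟨a, ha, rfl⟩ := List.mem_map.mp hx
    obtain ⟨b, hb, rfl⟩ := List.mem_map.mp hy
    have hab : (G.induce S).Adj a b := hadj
    have hedge := hwp_ind a ha b hb hab
    rw [hR, Walk.edges_map]
    exact List.mem_map.mpr ⟨s(a, b), hedge, by simp [g]⟩
  have hR2 : 2 ≤ R.length := two_le_length_of_not_adj R huv hnadjuv
  -- the key parity claim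
  have key : ∀ p' : G.Walk u v, IsInducedPath G p' → InteriorIn G p' (lowerLevels L (k - 1)) →
      (Odd p'.length ↔ Odd R.length) := by
    intro p' hp' hint'
    have hp2 : 2 ≤ p'.length := two_le_length_of_not_adj p' huv hnadjuv
    have hsupp_inter : ∀ z, z ∈ p'.support → z ∈ R.support → z = u ∨ z = v := by
      intro z hzp hzR
      by_contra hcon
      push_neg at hcon
      have hz1 : z ∈ lowerLevels L (k - 1) := hint' z hzp hcon.1 hcon.2
      have hz2 : z ∈ L k := hRint z hzR hcon.1 hcon.2
      exact hlowdisj z hz1 k (by omega) le_rfl hz2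
    set C : G.Walk u u := p'.append R.reverse with hC
    have hClen : C.length = p'.length + R.length := by
      rw [hC, Walk.length_append, Walk.length_reverse]
    have hCedges : C.edges = p'.edges ++ R.reverse.edges := Walk.edges_append _ _
    have hedisj : ∀ e ∈ p'.edges, e ∉ R.reverse.edges := by
      intro e hep heR
      rw [Walk.edges_reverse, List.mem_reverse] at heR
      revert hep heR
      induction e using Sym2.ind with
      | _ a b =>
        intro hep heR
        have hadj : G.Adj a b := Walk.adj_of_mem_edges p' hep
        have hap : a ∈ p'.support := Walk.fst_mem_support_of_mem_edges p' hep
        have hbp : b ∈ p'.support := Walk.snd_mem_support_of_mem_edges p' hep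
        have haR : a ∈ R.support := Walk.fst_mem_support_of_mem_edges R heR
        have hbR : b ∈ R.support := Walk.snd_mem_support_of_mem_edges R heR
        rcases hsupp_inter a hap haR with rfl | rfl <;>
          rcases hsupp_inter b hbp hbR with rfl | rfl
        · exact hadj.ne rfl
        · exact hnadjuv hadj
        · exact hnadjuv hadj.symm
        · exact hadj.ne rfl
    have htrail : C.IsTrail := by
      constructor
      rw [hCedges]
      exact List.Nodup.append hp'.1.edges_nodup hRpath.reverse.edges_nodup hedisj
    have hCne : C ≠ Walk.nil := by
      intro h
      have h0 : C.length = 0 := by rw [h]; rfl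
      omega
    have hu_not : u ∉ p'.support.tail := by
      have hnd := hp'.1.support_nodup
      rw [Walk.support_eq_cons] at hnd
      exact (List.nodup_cons.mp hnd).1
    have hv_not : v ∉ R.reverse.support.tail := by
      have hnd := hRpath.reverse.support_nodup
      rw [Walk.support_eq_cons] at hnd
      exact (List.nodup_cons.mp hnd).1
    have htail : C.support.tail.Nodup := by
      have hCsupp : C.support = p'.support ++ R.reverse.support.tail := Walk.support_append _ _
      rw [hCsupp, Walk.support_eq_cons p', List.cons_append, List.tail_cons]
      refine List.Nodup.append ?_ ?_ ?_
      · have h := hp'.1.support_nodup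
        rw [Walk.support_eq_cons] at h
        exact (List.nodup_cons.mp h).2
      · have h := hRpath.reverse.support_nodup
        rw [Walk.support_eq_cons] at h
        exact (List.nodup_cons.mp h).2
      · intro z hz1 hz2
        have hzp : z ∈ p'.support := by rw [Walk.support_eq_cons p']; exact List.mem_cons_of_mem _ hz1
        have hzR : z ∈ R.support := by
          have := List.mem_of_mem_tail hz2
          rwa [Walk.support_reverse, List.mem_reverse] at this
        rcases hsupp_inter z hzp hzR with rfl | rfl
        · exact hu_not hz1
        · exact hv_not hz2
    have hcycle : C.IsCycle := ⟨⟨htrail, hCne⟩, htail⟩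
    have hCind : IsInducedWalk G C := by
      intro x hx y hy hadj
      rw [hC, Walk.mem_support_append_iff] at hx hy
      have hx' : x ∈ p'.support ∨ x ∈ R.support := by
        rcases hx with h | h
        · exact Or.inl h
        · right; rwa [Walk.support_reverse, List.mem_reverse] at h
      have hy' : y ∈ p'.support ∨ y ∈ R.support := by
        rcases hy with h | h
        · exact Or.inl h
        · right; rwa [Walk.support_reverse, List.mem_reverse] at h
      rw [← Subgraph.mem_edgeSet, Walk.mem_edges_toSubgraph, hCedges, List.mem_append]
      have pcase : x ∈ p'.support → y ∈ p'.support →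
          s(x, y) ∈ p'.edges ∨ s(x, y) ∈ R.reverse.edges := by
        intro hxp hyp
        left
        have := hp'.2 x hxp y hyp hadj
        rwa [← Subgraph.mem_edgeSet, Walk.mem_edges_toSubgraph] at this
      have rcase : x ∈ R.support → y ∈ R.support →
          s(x, y) ∈ p'.edges ∨ s(x, y) ∈ R.reverse.edges := by
        intro hxR hyR
        right
        rw [Walk.edges_reverse, List.mem_reverse]
        exact hRind x hxR y hyR hadj
      rcases hx' with hxp | hxR
      · rcases hy' with hyp | hyR
        · exact pcase hxp hyp
        · by_cases hxR : x ∈ R.support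
          · exact rcase hxR hyR
          · by_cases hyp : y ∈ p'.support
            · exact pcase hxp hyp
            · exfalso
              have hxu : x ≠ u := fun h => hxR (h ▸ huR)
              have hxv : x ≠ v := fun h => hxR (h ▸ hvR)
              have hyu : y ≠ u := fun h => hyp (h ▸ Walk.start_mem_support p')
              have hyv : y ≠ v := fun h => hyp (h ▸ Walk.end_mem_support p')
              exact hnoadjlow x (hint' x hxp hxu hxv) y (hRint y hyR hyu hyv) hadj
      · rcases hy' with hyp | hyR
        · by_cases hyR : y ∈ R.support
          · exact rcase hxR hyR
          · by_cases hxp : x ∈ p'.support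
            · exact pcase hxp hyp
            · exfalso
              have hyu : y ≠ u := fun h => hyR (h ▸ huR)
              have hyv : y ≠ v := fun h => hyR (h ▸ hvR)
              have hxu : x ≠ u := fun h => hxp (h ▸ Walk.start_mem_support p')
              have hxv : x ≠ v := fun h => hxp (h ▸ Walk.end_mem_support p')
              exact hnoadjlow y (hint' y hyp hyu hyv) x (hRint x hxR hxu hxv) hadj.symm
        · exact rcase hxR hyR
    have hnotodd : ¬ Odd C.length := by
      intro hodd
      obtain ⟨m, hm⟩ := hodd
      exact hnoodd ⟨u, C, hcycle, hCind, ⟨m, hm⟩, by omega⟩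
    have heven : Even (p'.length + R.length) := by
      rw [← hClen]
      exact Nat.not_odd_iff_even.mp hnotodd
    rw [Nat.even_add] at heven
    rw [← Nat.not_even_iff_odd, ← Nat.not_even_iff_odd]
    tauto
  exact (key p hp hpint).trans (key q hq hqint).symm
end

section
/- Let G be a graph with no odd hole, and let (L0, …, Lk) be a levelling in G with k ≥ 3 such that G[Lk] is connected, every vertex of L(k−1) and L(k−2) has a dependent in the next level (a vertex of which it is the only parent), and adjacent vertices in any Li (1 ≤ i ≤ k−2) have the same set of parents. Then G[L(k−2)] is a cograph. -/
open SimpleGraph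

universe u

variable {V : Type u}

section Helpers

variable {G : SimpleGraph V}

lemma toSubgraph_adj_iff' {u v x y : V} (p : G.Walk u v) :
    p.toSubgraph.Adj x y ↔ s(x, y) ∈ p.edges := by
  rw [← SimpleGraph.Subgraph.mem_edgeSet, Walk.mem_edges_toSubgraph]

lemma mem_support_concat' {u v w x : V} (p : G.Walk u v) (h : G.Adj v w) :
    x ∈ (p.concat h).support ↔ x ∈ p.support ∨ x = w := by
  simp [Walk.support_concat, List.concat_eq_append]

lemma mem_edges_of_length_one {x y : V} (p : G.Walk x y) (h : p.length = 1) :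
    s(x, y) ∈ p.edges := by
  match p with
  | .nil => simp at h
  | .cons a .nil => simp
  | .cons _ (.cons _ _) => simp [Walk.length_cons] at h

lemma concat_isPath {u v w : V} {p : G.Walk u v} (hp : p.IsPath) (h : G.Adj v w)
    (hw : w ∉ p.support) : (p.concat h).IsPath := by
  rw [← Walk.isPath_reverse_iff, Walk.reverse_concat, Walk.cons_isPath_iff]
  refine ⟨by simpa using hp, by simpa using hw⟩

lemma induced_concat {u v w : V} {p : G.Walk u v} (hp : IsInducedPath G p) (h : G.Adj v w)
    (hw : w ∉ p.support) (hmax : ∀ x ∈ p.support, G.Adj x w → x = v) :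
    IsInducedPath G (p.concat h) := by
  refine ⟨concat_isPath hp.1 h hw, ?_⟩
  intro x hx y hy hxy
  rw [mem_support_concat'] at hx hy
  rw [toSubgraph_adj_iff', Walk.edges_concat, List.concat_eq_append, List.mem_append]
  rcases hx with hx | rfl
  · rcases hy with hy | rfl
    · exact Or.inl ((toSubgraph_adj_iff' p).mp (hp.2 x hx y hy hxy))
    · have := hmax x hx hxy; subst this; simp
  · rcases hy with hy | rfl
    · have := hmax y hy hxy.symm; subst this
      simp [Sym2.eq_swap]
    · exact absurd hxy (G.loopless.irrefl _)

lemma induced_cons {u v z : V} {p : G.Walk u v} (hp : IsInducedPath G p) (h : G.Adj z u)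
    (hz : z ∉ p.support) (hmax : ∀ x ∈ p.support, G.Adj z x → x = u) :
    IsInducedPath G (Walk.cons h p) := by
  refine ⟨by rw [Walk.cons_isPath_iff]; exact ⟨hp.1, hz⟩, ?_⟩
  intro x hx y hy hxy
  rw [Walk.support_cons, List.mem_cons] at hx hy
  rw [toSubgraph_adj_iff', Walk.edges_cons, List.mem_cons]
  rcases hx with rfl | hx
  · rcases hy with rfl | hy
    · exact absurd hxy (G.loopless.irrefl _)
    · have := hmax y hy hxy; subst this; simp
  · rcases hy with rfl | hy
    · have := hmax x hx hxy.symm; subst this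
      simp [Sym2.eq_swap]
    · exact Or.inr ((toSubgraph_adj_iff' p).mp (hp.2 x hx y hy hxy))

lemma hole_of_path {u v z : V} (p : G.Walk u v) (hp : IsInducedPath G p)
    (hzu : G.Adj z u) (hzv : G.Adj z v) (hz : z ∉ p.support)
    (hmaxu : ∀ x ∈ p.support, G.Adj z x → x = u ∨ x = v)
    (hlen : 3 ≤ p.length) (hodd : Odd p.length) : HasOddHole G := by
  have huv : u ≠ v := by
    rintro rfl
    rw [Walk.isPath_iff_eq_nil.mp hp.1] at hlen
    simp at hlen
  have hzv' : z ≠ v := fun hzv' => hz (hzv' ▸ Walk.end_mem_support p)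
  set q : G.Walk u z := p.concat hzv.symm with hq
  have hqpath : q.IsPath := concat_isPath hp.1 hzv.symm hz
  refine ⟨z, Walk.cons hzu q, ?_, ?_, ?_, ?_⟩
  · rw [Walk.cons_isCycle_iff]
    refine ⟨hqpath, ?_⟩
    rw [hq, Walk.edges_concat, List.concat_eq_append, List.mem_append]
    rintro (hmem | hmem)
    · exact hz (Walk.fst_mem_support_of_mem_edges p hmem)
    · simp only [List.mem_singleton, Sym2.eq, Sym2.rel_iff', Prod.mk.injEq,
        Prod.swap_prod_mk] at hmem
      rcases hmem with ⟨h1, h2⟩ | ⟨h1, h2⟩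
      · exact hzv' h1
      · exact huv h2
  · intro x hx y hy hxy
    rw [Walk.support_cons, List.mem_cons, hq, mem_support_concat'] at hx hy
    rw [toSubgraph_adj_iff', Walk.edges_cons, List.mem_cons, hq, Walk.edges_concat,
      List.concat_eq_append, List.mem_append]
    have hcase : ∀ y' ∈ p.support, G.Adj z y' →
        s(z, y') = s(z, u) ∨ s(z, y') ∈ p.edges ∨ s(z, y') ∈ [s(v, z)] := by
      intro y' hy' hadj
      rcases hmaxu y' hy' hadj with rfl | rfl
      · exact Or.inl rfl
      · right; right; simp [Sym2.eq_swap]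
    rcases hx with rfl | hx | rfl
    · rcases hy with rfl | hy | rfl
      · exact absurd hxy (G.loopless.irrefl _)
      · exact hcase y hy hxy
      · exact absurd hxy (G.loopless.irrefl _)
    · rcases hy with rfl | hy | rfl
      · rcases hcase x hx hxy.symm with h1 | h1 | h1
        · left; rw [← h1]; exact Sym2.eq_swap
        · right; left; rw [Sym2.eq_swap]; exact h1
        · right; right; simpa [Sym2.eq_swap] using h1
      · exact Or.inr (Or.inl ((toSubgraph_adj_iff' p).mp (hp.2 x hx y hy hxy)))
      · rcases hcase x hx hxy.symm with h1 | h1 | h1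
        · left; rw [← h1]; exact Sym2.eq_swap
        · right; left; rw [Sym2.eq_swap]; exact h1
        · right; right; simpa [Sym2.eq_swap] using h1
    · rcases hy with rfl | hy | rfl
      · exact absurd hxy (G.loopless.irrefl _)
      · exact hcase y hy hxy
      · exact absurd hxy (G.loopless.irrefl _)
  · have : (Walk.cons hzu q).length = p.length + 2 := by
      simp [hq, Walk.length_concat]
    rw [this]
    obtain ⟨m, hm⟩ := hodd
    exact ⟨m + 1, by omega⟩
  · have : (Walk.cons hzu q).length = p.length + 2 := by
      simp [hq, Walk.length_concat]
    omega

lemma exists_induced_path_in (S : Set V) (u v : V)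
    (h : ∃ p : G.Walk u v, ∀ x ∈ p.support, x ∈ S) :
    ∃ p : G.Walk u v, IsInducedPath G p ∧ ∀ x ∈ p.support, x ∈ S := by
  classical
  have hex : ∃ n, ∃ p : G.Walk u v, (∀ x ∈ p.support, x ∈ S) ∧ p.length = n := by
    obtain ⟨p, hp⟩ := h
    exact ⟨p.length, p, hp, rfl⟩
  obtain ⟨p₀, hp₀S, hp₀l⟩ := Nat.find_spec hex
  set R := p₀.bypass with hR
  have hRS : ∀ x ∈ R.support, x ∈ S := fun x hx => hp₀S x (Walk.support_bypass_subset _ hx)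
  have hRpath : R.IsPath := Walk.bypass_isPath _
  have hmin : ∀ q : G.Walk u v, (∀ x ∈ q.support, x ∈ S) → R.length ≤ q.length := by
    intro q hq
    calc R.length ≤ p₀.length := Walk.length_bypass_le _
    _ = Nat.find hex := hp₀l
    _ ≤ q.length := Nat.find_min' hex ⟨q, hq, rfl⟩
  refine ⟨R, ⟨hRpath, ?_⟩, hRS⟩
  intro x hx y hy hxy
  rw [toSubgraph_adj_iff']
  set R1 := R.takeUntil x hx with hR1
  set R2 := R.dropUntil x hx with hR2
  have hspec : R1.append R2 = R := Walk.take_spec R hx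
  have hlenR : R1.length + R2.length = R.length := by
    rw [← hspec, Walk.length_append]
  have hy' : y ∈ R1.support ∨ y ∈ R2.support := by
    rw [← hspec, Walk.mem_support_append_iff] at hy
    exact hy
  rcases hy' with hy1 | hy2
  · set R3 := R1.takeUntil y hy1 with hR3
    set R4 := R1.dropUntil y hy1 with hR4
    have hspec2 : R3.append R4 = R1 := Walk.take_spec R1 hy1
    have hlen1 : R3.length + R4.length = R1.length := by
      rw [← hspec2, Walk.length_append]
    have hqS : ∀ z ∈ (R3.append (Walk.cons hxy.symm R2)).support, z ∈ S := by
      intro z hz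
      rw [Walk.mem_support_append_iff, Walk.support_cons, List.mem_cons] at hz
      rcases hz with hz | hz | hz
      · exact hRS z (Walk.support_takeUntil_subset _ _ (Walk.support_takeUntil_subset _ _ hz))
      · rw [hz]; exact hRS y hy
      · exact hRS z (Walk.support_dropUntil_subset _ _ hz)
    have := hmin _ hqS
    rw [Walk.length_append, Walk.length_cons] at this
    have h41 : R4.length = 1 := by
      have hne : y ≠ x := hxy.ne.symm
      have hle : R4.length ≤ 1 := by omega
      interval_cases h : R4.length
      · exact absurd (Walk.eq_of_length_eq_zero h) hne
      · rfl
    have hmem : s(y, x) ∈ R4.edges := mem_edges_of_length_one _ h41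
    have hmem2 : s(y, x) ∈ R.edges := by
      rw [← hspec, ← hspec2]
      rw [Walk.edges_append, Walk.edges_append, List.mem_append, List.mem_append]
      exact Or.inl (Or.inr hmem)
    rwa [Sym2.eq_swap] at hmem2
  · set R3 := R2.takeUntil y hy2 with hR3
    set R4 := R2.dropUntil y hy2 with hR4
    have hspec2 : R3.append R4 = R2 := Walk.take_spec R2 hy2
    have hlen2 : R3.length + R4.length = R2.length := by
      rw [← hspec2, Walk.length_append]
    have hqS : ∀ z ∈ (R1.append (Walk.cons hxy R4)).support, z ∈ S := by
      intro z hz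
      rw [Walk.mem_support_append_iff, Walk.support_cons, List.mem_cons] at hz
      rcases hz with hz | hz | hz
      · exact hRS z (Walk.support_takeUntil_subset _ _ hz)
      · rw [hz]; exact hRS x hx
      · exact hRS z (Walk.support_dropUntil_subset _ _
          (Walk.support_dropUntil_subset _ _ hz))
    have := hmin _ hqS
    rw [Walk.length_append, Walk.length_cons] at this
    have h31 : R3.length = 1 := by
      have hne : x ≠ y := hxy.ne
      have hle : R3.length ≤ 1 := by omega
      interval_cases h : R3.length
      · exact absurd (Walk.eq_of_length_eq_zero h) hne
      · rfl
    have hmem : s(x, y) ∈ R3.edges := mem_edges_of_length_one _ h31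
    rw [← hspec, ← hspec2]
    rw [Walk.edges_append, Walk.edges_append, List.mem_append, List.mem_append]
    exact Or.inr (Or.inl hmem)

end Helpers

theorem stmt17 [Fintype V] (G : SimpleGraph V) (k : ℕ) (hk : 3 ≤ k) (L : ℕ → Set V)
    (hnoodd : ¬ HasOddHole G) (hlev : IsLevelling G k L)
    (hconn : (G.induce (L k)).Connected)
    (hdep1 : ∀ u ∈ L (k - 1), ∃ w, IsDependent G L (k - 1) u w)
    (hdep2 : ∀ u ∈ L (k - 2), ∃ w, IsDependent G L (k - 2) u w)
    (hparent : ∀ i, 1 ≤ i → i ≤ k - 2 → ∀ u ∈ L i, ∀ v ∈ L i, G.Adj u v →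
       ∀ w ∈ L (i - 1), (G.Adj w u ↔ G.Adj w v)) :
    IsCograph (G.induce (L (k - 2))) := by
  classical
  obtain ⟨hdisj, -, hnbr⟩ := hlev
  have e1 : k - 2 + 1 = k - 1 := by omega
  have e2 : k - 1 + 1 = k := by omega
  have hne : ∀ {i i' : ℕ} {x : V}, i ≤ k → i' ≤ k → i ≠ i' → x ∈ L i → x ∉ L i' :=
    fun hi hi' hii hx => Set.disjoint_left.mp (hdisj _ _ hi hi' hii) hx
  have hnon : ∀ {i h' : ℕ} {x y : V}, 1 ≤ i → i ≤ k → h' + 1 < i → x ∈ L i → y ∈ L h' →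
      ¬ G.Adj y x := fun hi1 hik hh hx hy => (hnbr _ hi1 hik _ hx).2 _ hh _ hy
  unfold IsCograph
  rintro ⟨⟨a, haL⟩, ⟨b, hbL⟩, ⟨c, hcL⟩, ⟨d, hdL⟩, hac0, had0, hbd0, hab0, hbc0, hcd0,
    nac0, nad0, nbd0⟩
  have hab : G.Adj a b := hab0
  have hbc : G.Adj b c := hbc0
  have hcd : G.Adj c d := hcd0
  have nac : ¬ G.Adj a c := fun h => nac0 h
  have nad : ¬ G.Adj a d := fun h => nad0 h
  have nbd : ¬ G.Adj b d := fun h => nbd0 h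
  have hac : a ≠ c := fun h => hac0 (Subtype.ext h)
  have had : a ≠ d := fun h => had0 (Subtype.ext h)
  have hbd : b ≠ d := fun h => hbd0 (Subtype.ext h)
  -- common parent q ∈ L (k - 2 - 1)
  obtain ⟨q, hqL, hqa⟩ := (hnbr (k - 2) (by omega) (by omega) a haL).1
  have hqb : G.Adj q b := (hparent (k - 2) (by omega) le_rfl a haL b hbL hab q hqL).mp hqa
  have hqc : G.Adj q c := (hparent (k - 2) (by omega) le_rfl b hbL c hcL hbc q hqL).mp hqb
  have hqd : G.Adj q d := (hparent (k - 2) (by omega) le_rfl c hcL d hdL hcd q hqL).mp hqc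
  -- dependents
  obtain ⟨a₁, ha₁L, haa₁, ha₁only⟩ := hdep2 a haL
  rw [e1] at ha₁L
  obtain ⟨d₁, hd₁L, hdd₁, hd₁only⟩ := hdep2 d hdL
  rw [e1] at hd₁L
  obtain ⟨a₂, ha₂L, ha₁a₂, -⟩ := hdep1 a₁ ha₁L
  rw [e2] at ha₂L
  obtain ⟨d₂, hd₂L, hd₁d₂, -⟩ := hdep1 d₁ hd₁L
  rw [e2] at hd₂L
  have ha₁d₁ : a₁ ≠ d₁ := by
    rintro rfl
    exact had (ha₁only d hdL hdd₁).symm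
  -- nonadjacency facts
  have hnotk : ∀ y ∈ L (k - 2), ∀ x ∈ L k, ¬ G.Adj y x :=
    fun y hy x hx => hnon (by omega) le_rfl (by omega) hx hy
  have nqk : ∀ x ∈ L k, ¬ G.Adj q x :=
    fun x hx => hnon (by omega) le_rfl (by omega) hx hqL
  have nq1 : ∀ x ∈ L (k - 1), ¬ G.Adj q x :=
    fun x hx => hnon (by omega) (by omega) (by omega) hx hqL
  -- walk from a₁ to d₁ with support in S
  have hSmem : ∀ {x : V}, x ∈ L k ∪ {a₁, d₁} ↔ x ∈ L k ∨ x = a₁ ∨ x = d₁ := by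
    intro x
    simp only [Set.mem_union, Set.mem_insert_iff, Set.mem_singleton_iff]
  obtain ⟨w₀⟩ := hconn.preconnected ⟨a₂, ha₂L⟩ ⟨d₂, hd₂L⟩
  let f : G.induce (L k) →g G := ⟨Subtype.val, fun h => h⟩
  let w₁ : G.Walk a₂ d₂ := w₀.map f
  have hw₁S : ∀ x ∈ w₁.support, x ∈ L k := by
    intro x hx
    rw [Walk.support_map, List.mem_map] at hx
    obtain ⟨t, -, rfl⟩ := hx
    exact t.2
  have hWex : ∃ p : G.Walk a₁ d₁, ∀ x ∈ p.support, x ∈ L k ∪ {a₁, d₁} := by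
    refine ⟨Walk.cons ha₁a₂ (w₁.concat hd₁d₂.symm), ?_⟩
    intro x hx
    rw [Walk.support_cons, List.mem_cons, mem_support_concat'] at hx
    rcases hx with rfl | hx | rfl
    · exact hSmem.mpr (Or.inr (Or.inl rfl))
    · exact hSmem.mpr (Or.inl (hw₁S x hx))
    · exact hSmem.mpr (Or.inr (Or.inr rfl))
  obtain ⟨R, ⟨hRpath, hRind⟩, hRS⟩ := exists_induced_path_in (L k ∪ {a₁, d₁}) a₁ d₁ hWex
  have hRmem : ∀ x ∈ R.support, x ∈ L k ∨ x = a₁ ∨ x = d₁ := fun x hx => hSmem.mp (hRS x hx)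
  have hRlen : 1 ≤ R.length := by
    rcases Nat.eq_zero_or_pos R.length with h0 | h
    · exact absurd (Walk.eq_of_length_eq_zero h0) ha₁d₁
    · exact h
  have hnotinR : ∀ y ∈ L (k - 2), y ∉ R.support := by
    intro y hy hmem
    rcases hRmem y hmem with h | rfl | rfl
    · exact hne (by omega) le_rfl (by omega) hy h
    · exact hne (by omega) (by omega) (by omega) hy ha₁L
    · exact hne (by omega) (by omega) (by omega) hy hd₁L
  have hqnotinR : q ∉ R.support := by
    intro hmem
    rcases hRmem q hmem with h | rfl | rfl
    · exact hne (by omega) le_rfl (by omega) hqL h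
    · exact hne (by omega) (by omega) (by omega) hqL ha₁L
    · exact hne (by omega) (by omega) (by omega) hqL hd₁L
  -- the walk Q1 : a₁ ⋯ d₁ d
  have hdnotinR : d ∉ R.support := hnotinR d hdL
  have hQ1 : IsInducedPath G (R.concat hdd₁.symm) := by
    refine induced_concat ⟨hRpath, hRind⟩ _ hdnotinR ?_
    intro x hx hxd
    rcases hRmem x hx with h | rfl | rfl
    · exact absurd hxd.symm (hnotk d hdL x h)
    · exact absurd (ha₁only d hdL hxd.symm).symm had
    · rfl
  apply hnoodd
  rcases Nat.even_or_odd R.length with hev | hodd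
  · -- even case: close through b, c with apex a
    have hQ2 : IsInducedPath G ((R.concat hdd₁.symm).concat hcd.symm) := by
      refine induced_concat hQ1 _ ?_ ?_
      · rw [mem_support_concat']
        rintro (h | h)
        · exact hnotinR c hcL h
        · exact hcd.ne h
      · intro x hx hxc
        rw [mem_support_concat'] at hx
        rcases hx with hx | rfl
        · rcases hRmem x hx with h | rfl | rfl
          · exact absurd hxc.symm (hnotk c hcL x h)
          · exact absurd (ha₁only c hcL hxc.symm).symm hac
          · exact absurd (hd₁only c hcL hxc.symm) hcd.ne
        · rfl
    have hQ3 : IsInducedPath G (((R.concat hdd₁.symm).concat hcd.symm).concat hbc.symm) := by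
      refine induced_concat hQ2 _ ?_ ?_
      · rw [mem_support_concat', mem_support_concat']
        rintro ((h | h) | h)
        · exact hnotinR b hbL h
        · exact hbd h
        · exact hbc.ne h
      · intro x hx hxb
        rw [mem_support_concat', mem_support_concat'] at hx
        rcases hx with (hx | rfl) | rfl
        · rcases hRmem x hx with h | rfl | rfl
          · exact absurd hxb.symm (hnotk b hbL x h)
          · exact absurd (ha₁only b hbL hxb.symm).symm hab.ne
          · exact absurd (hd₁only b hbL hxb.symm) hbd
        · exact absurd hxb.symm nbd
        · rfl
    refine hole_of_path _ hQ3 haa₁ hab ?_ ?_ ?_ ?_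
    · rw [mem_support_concat', mem_support_concat', mem_support_concat']
      rintro (((h | h) | h) | h)
      · exact hnotinR a haL h
      · exact had h
      · exact hac h
      · exact hab.ne h
    · intro x hx hax
      rw [mem_support_concat', mem_support_concat', mem_support_concat'] at hx
      rcases hx with ((hx | rfl) | rfl) | rfl
      · rcases hRmem x hx with h | rfl | rfl
        · exact absurd hax (hnotk a haL x h)
        · exact Or.inl rfl
        · exact absurd (hd₁only a haL hax) had
      · exact absurd hax nad
      · exact absurd hax nac
      · exact Or.inr rfl
    · simp only [Walk.length_concat]
      omega
    · simp only [Walk.length_concat]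
      obtain ⟨m, hm⟩ := hev
      exact ⟨m + 1, by omega⟩
  · -- odd case: apex q on the path a a₁ ⋯ d₁ d
    have hanotinQ1 : a ∉ (R.concat hdd₁.symm).support := by
      rw [mem_support_concat']
      rintro (h | h)
      · exact hnotinR a haL h
      · exact had h
    have hP : IsInducedPath G (Walk.cons haa₁ (R.concat hdd₁.symm)) := by
      refine induced_cons hQ1 haa₁ hanotinQ1 ?_
      intro x hx hax
      rw [mem_support_concat'] at hx
      rcases hx with hx | rfl
      · rcases hRmem x hx with h | rfl | rfl
        · exact absurd hax (hnotk a haL x h)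
        · rfl
        · exact absurd (hd₁only a haL hax) had
      · exact absurd hax nad
    refine hole_of_path _ hP hqa hqd ?_ ?_ ?_ ?_
    · rw [Walk.support_cons, List.mem_cons, mem_support_concat']
      rintro (h | h | h)
      · exact hne (by omega) (by omega) (by omega) hqL (h.symm ▸ haL)
      · exact hqnotinR h
      · exact hne (by omega) (by omega) (by omega) hqL (h.symm ▸ hdL)
    · intro x hx hqx
      rw [Walk.support_cons, List.mem_cons, mem_support_concat'] at hx
      rcases hx with rfl | hx | rfl
      · exact Or.inl rfl
      · rcases hRmem x hx with h | h | h
        · exact absurd hqx (nqk x h)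
        · exact absurd (h ▸ hqx) (nq1 a₁ ha₁L)
        · exact absurd (h ▸ hqx) (nq1 d₁ hd₁L)
      · exact Or.inr rfl
    · simp only [Walk.length_cons, Walk.length_concat]
      omega
    · simp only [Walk.length_cons, Walk.length_concat]
      obtain ⟨m, hm⟩ := hodd
      exact ⟨m + 1, by omega⟩
end
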